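/- arXiv:1710.01898 — 4 statements merged into one kernel-verified Lean document; each statement's English description precedes it below -/
import Mathlib

section
/- Let ξ₁, …, ξₙ be i.i.d. centered real random variables with E(ξ₁⁸) < ∞, and set Rₙ = ((1/n)∑ᵢ₌₁ⁿ ξᵢ)². Then E((Rₙ − Rₙ₋₁)²) = O(n⁻³) as n → ∞. -/
open ENNReal MeasureTheory ProbabilityTheory Finset Filter Asymptotics
lemma memℒp_four_iff {α : Type*} [MeasurableSpace α] {μ : Measure α} {f : α → ℝ}
    (hf : AEStronglyMeasurable f μ) :
    MemLp f 4 μ ↔ Integrable (fun x => f x ^ 4) μ := by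
  rw [← memLp_one_iff_integrable]
  have h1 : (fun x => f x ^ 4) = fun x => ‖f x‖ ^ ((4 : ℝ≥0∞)).toReal := by
    ext x
    rw [ENNReal.toReal_ofNat, Real.norm_eq_abs, show ((4:ℝ)) = ((4:ℕ):ℝ) by norm_num,
      Real.rpow_natCast, ← abs_pow, abs_of_nonneg (by positivity)]
  have h2 := memLp_norm_rpow_iff (q := 4) (p := 4) hf (by norm_num) (by norm_num)
  rw [ENNReal.div_self (by norm_num) (by norm_num)] at h2
  rw [h1, h2]
lemma integrable_pow_of_le {α : Type*} [MeasurableSpace α] {μ : Measure α} [IsFiniteMeasure μ]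
    {f : α → ℝ} {m k : ℕ} (hf : AEStronglyMeasurable f μ) (hk : k ≤ m)
    (hm : Integrable (fun x => |f x| ^ m) μ) : Integrable (fun x => f x ^ k) μ := by
  apply Integrable.mono' ((integrable_const (1:ℝ)).add hm)
    ((hf.aemeasurable.pow_const k).aestronglyMeasurable)
  filter_upwards with x
  simp only [Pi.add_apply, Real.norm_eq_abs, abs_pow]
  rcases le_total (|f x|) 1 with h | h
  · have h1 : |f x| ^ k ≤ 1 := pow_le_one₀ (abs_nonneg _) h
    have h2 : (0:ℝ) ≤ |f x| ^ m := pow_nonneg (abs_nonneg _) m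
    linarith
  · have h1 : |f x| ^ k ≤ |f x| ^ m := pow_le_pow_right₀ h hk
    linarith
set_option maxHeartbeats 2000000 in
/-- for i.i.d. centered ξ with finite eighth moment,
`E((Rₙ − Rₙ₋₁)²) = O(n⁻³)` where `Rₙ` is the squared sample mean. -/
theorem stmt_2 {Ω : Type*} [MeasureSpace Ω] [IsProbabilityMeasure (ℙ : Measure Ω)]
    (ξ : ℕ → Ω → ℝ)
    (hmeas : ∀ i, Measurable (ξ i))
    (hindep : iIndepFun ξ ℙ)
    (hident : ∀ i, Measure.map (ξ i) ℙ = Measure.map (ξ 0) ℙ)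
    (hcent : ∫ ω, ξ 0 ω ∂ℙ = 0)
    (hmom : Integrable (fun ω => (ξ 0 ω) ^ 8) ℙ)
    (R : ℕ → Ω → ℝ)
    (hR : ∀ n ω, R n ω = (((1 : ℝ) / n) * ∑ i ∈ range n, ξ i ω) ^ 2) :
    (fun n : ℕ => ∫ ω, (R n ω - R (n - 1) ω) ^ 2 ∂ℙ)
      =O[atTop] fun n : ℕ => ((n : ℝ) ^ 3)⁻¹ := by
  -- moment value transfer
  have hval : ∀ (i k : ℕ), ∫ ω, ξ i ω ^ k ∂ℙ = ∫ ω, ξ 0 ω ^ k ∂ℙ := by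
    intro i k
    have hg : AEMeasurable (fun x : ℝ => x ^ k) := (measurable_id.pow_const k).aemeasurable
    have e1 := integral_map (μ := ℙ) (hmeas i).aemeasurable
      (f := fun x : ℝ => x ^ k) ((measurable_id.pow_const k).aestronglyMeasurable)
    have e2 := integral_map (μ := ℙ) (hmeas 0).aemeasurable
      (f := fun x : ℝ => x ^ k) ((measurable_id.pow_const k).aestronglyMeasurable)
    rw [← e1, ← e2, hident i]
  -- integrability transfer
  have hint : ∀ (i k : ℕ), k ≤ 8 → Integrable (fun ω => ξ i ω ^ k) ℙ := by
    intro i k hk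
    have hgm : AEStronglyMeasurable (fun x : ℝ => x ^ 8) (Measure.map (ξ i) ℙ) :=
      (measurable_id.pow_const 8).aestronglyMeasurable
    have hgm0 : AEStronglyMeasurable (fun x : ℝ => x ^ 8) (Measure.map (ξ 0) ℙ) :=
      (measurable_id.pow_const 8).aestronglyMeasurable
    have A : Integrable (fun x : ℝ => x ^ 8) (Measure.map (ξ 0) ℙ) :=
      (integrable_map_measure hgm0 (hmeas 0).aemeasurable).2 hmom
    have B : Integrable (fun x : ℝ => x ^ 8) (Measure.map (ξ i) ℙ) := by rw [hident i]; exact A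
    have h8 : Integrable (fun ω => ξ i ω ^ 8) ℙ :=
      (integrable_map_measure hgm (hmeas i).aemeasurable).1 B
    have h8' : Integrable (fun ω => |ξ i ω| ^ 8) ℙ := by
      apply h8.congr
      filter_upwards with ω
      rw [← abs_pow, abs_of_nonneg (by positivity)]
    exact integrable_pow_of_le (hmeas i).aestronglyMeasurable hk h8'
  set S : ℕ → Ω → ℝ := fun n ω => ∑ i ∈ range n, ξ i ω with hSdef
  have hSapp : ∀ n ω, S n ω = ∑ i ∈ range n, ξ i ω := fun _ _ => rfl
  have hSmeas : ∀ n, Measurable (S n) := fun n => Finset.measurable_sum _ (fun i _ => hmeas i)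
  have hSmem : ∀ n, MemLp (S n) 4 ℙ := by
    intro n
    have hm : ∀ i ∈ range n, MemLp (ξ i) 4 ℙ := fun i _ =>
      (memℒp_four_iff (hmeas i).aestronglyMeasurable).2 (hint i 4 (by norm_num))
    have h := memLp_finsetSum' (range n) hm
    have he : (∑ i ∈ range n, ξ i) = S n := by
      funext ω; rw [hSapp]; simp [Finset.sum_apply]
    rwa [he] at h
  have hS4 : ∀ n, Integrable (fun ω => S n ω ^ 4) ℙ := fun n =>
    (memℒp_four_iff (hSmeas n).aestronglyMeasurable).1 (hSmem n)
  have hSk : ∀ (n k : ℕ), k ≤ 4 → Integrable (fun ω => S n ω ^ k) ℙ := by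
    intro n k hk
    have h4' : Integrable (fun ω => |S n ω| ^ 4) ℙ := by
      apply (hS4 n).congr
      filter_upwards with ω
      rw [← abs_pow, abs_of_nonneg (by positivity)]
    exact integrable_pow_of_le (hSmeas n).aestronglyMeasurable hk h4'
  -- means
  have hξmean : ∀ i, ∫ ω, ξ i ω ∂ℙ = 0 := by
    intro i
    have := hval i 1
    simpa using this.trans (by simpa using hcent)
  have hSmean : ∀ n, ∫ ω, S n ω ∂ℙ = 0 := by
    intro n
    simp only [hSapp]
    rw [integral_finset_sum _ (fun i _ => by simpa using hint i 1 (by norm_num))]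
    simp [hξmean]
  -- independence
  have hSind : ∀ n, IndepFun (S n) (ξ n) ℙ := by
    intro n
    have h := hindep.indepFun_finsetSum_of_notMem hmeas (Finset.notMem_range_self (n := n))
    have he : (∑ i ∈ range n, ξ i) = S n := by
      funext ω; rw [hSapp]; simp [Finset.sum_apply]
    rwa [he] at h
  have hprodind : ∀ (n a b : ℕ), IndepFun (fun ω => S n ω ^ a) (fun ω => ξ n ω ^ b) ℙ :=
    fun n a b => (hSind n).comp (measurable_id.pow_const a) (measurable_id.pow_const b)
  have hprodint : ∀ (n a b : ℕ), a ≤ 4 → b ≤ 4 →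
      Integrable (fun ω => S n ω ^ a * ξ n ω ^ b) ℙ := fun n a b ha hb =>
    (hprodind n a b).integrable_mul (hSk n a ha) (hint n b (hb.trans (by norm_num)))
  have hprodval : ∀ (n a b : ℕ), ∫ ω, S n ω ^ a * ξ n ω ^ b ∂ℙ =
      (∫ ω, S n ω ^ a ∂ℙ) * (∫ ω, ξ n ω ^ b ∂ℙ) := fun n a b =>
    (hprodind n a b).integral_fun_mul_eq_mul_integral
      ((hSmeas n).pow_const a).aestronglyMeasurable ((hmeas n).pow_const b).aestronglyMeasurable
  set σ2 : ℝ := ∫ ω, ξ 0 ω ^ 2 ∂ℙ with hσ2def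
  set μ4 : ℝ := ∫ ω, ξ 0 ω ^ 4 ∂ℙ with hμ4def
  have hσ2nn : 0 ≤ σ2 := integral_nonneg (fun ω => by positivity)
  have hμ4nn : 0 ≤ μ4 := integral_nonneg (fun ω => by positivity)
  -- second moment of S
  have m2 : ∀ n, ∫ ω, S n ω ^ 2 ∂ℙ = n * σ2 := by
    intro n
    induction n with
    | zero => simp [hSapp]
    | succ n ih =>
      have hexp : ∀ ω, S (n+1) ω ^ 2 =
          (S n ω ^ 2 + 2 * (S n ω ^ 1 * ξ n ω ^ 1)) + ξ n ω ^ 2 := by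
        intro ω; rw [hSapp, hSapp, sum_range_succ]; ring
      rw [integral_congr_ae (ae_of_all _ hexp)]
      have i1 : Integrable (fun ω => S n ω ^ 2) ℙ := hSk n 2 (by norm_num)
      have i2 : Integrable (fun ω => 2 * (S n ω ^ 1 * ξ n ω ^ 1)) ℙ :=
        (hprodint n 1 1 (by norm_num) (by norm_num)).const_mul 2
      have i3 : Integrable (fun ω => ξ n ω ^ 2) ℙ := hint n 2 (by norm_num)
      have i12 : Integrable (fun ω => S n ω ^ 2 + 2 * (S n ω ^ 1 * ξ n ω ^ 1)) ℙ := i1.add i2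
      rw [integral_add i12 i3, integral_add i1 i2, integral_const_mul _ _,
        hprodval n 1 1, ih, hval n 2]
      simp only [pow_one, hξmean n, ← hσ2def]
      push_cast
      ring
  -- fourth moment of S
  have m4 : ∀ n, ∫ ω, S n ω ^ 4 ∂ℙ = n * μ4 + 3 * n * (n - 1) * σ2 ^ 2 := by
    intro n
    induction n with
    | zero => simp [hSapp]
    | succ n ih =>
      have hexp : ∀ ω, S (n+1) ω ^ 4 =
          (((S n ω ^ 4 + 4 * (S n ω ^ 3 * ξ n ω ^ 1)) + 6 * (S n ω ^ 2 * ξ n ω ^ 2))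
            + 4 * (S n ω ^ 1 * ξ n ω ^ 3)) + ξ n ω ^ 4 := by
        intro ω; rw [hSapp, hSapp, sum_range_succ]; ring
      rw [integral_congr_ae (ae_of_all _ hexp)]
      have i1 : Integrable (fun ω => S n ω ^ 4) ℙ := hS4 n
      have i2 : Integrable (fun ω => 4 * (S n ω ^ 3 * ξ n ω ^ 1)) ℙ :=
        (hprodint n 3 1 (by norm_num) (by norm_num)).const_mul 4
      have i3 : Integrable (fun ω => 6 * (S n ω ^ 2 * ξ n ω ^ 2)) ℙ :=
        (hprodint n 2 2 (by norm_num) (by norm_num)).const_mul 6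
      have i4 : Integrable (fun ω => 4 * (S n ω ^ 1 * ξ n ω ^ 3)) ℙ :=
        (hprodint n 1 3 (by norm_num) (by norm_num)).const_mul 4
      have i5 : Integrable (fun ω => ξ n ω ^ 4) ℙ := hint n 4 (by norm_num)
      have i12 : Integrable (fun ω => S n ω ^ 4 + 4 * (S n ω ^ 3 * ξ n ω ^ 1)) ℙ := i1.add i2
      have i123 : Integrable (fun ω => S n ω ^ 4 + 4 * (S n ω ^ 3 * ξ n ω ^ 1)
          + 6 * (S n ω ^ 2 * ξ n ω ^ 2)) ℙ := i12.add i3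
      have i1234 : Integrable (fun ω => S n ω ^ 4 + 4 * (S n ω ^ 3 * ξ n ω ^ 1)
          + 6 * (S n ω ^ 2 * ξ n ω ^ 2) + 4 * (S n ω ^ 1 * ξ n ω ^ 3)) ℙ := i123.add i4
      rw [integral_add i1234 i5,
        integral_add i123 i4, integral_add i12 i3,
        integral_add i1 i2, integral_const_mul _ _, integral_const_mul _ _, integral_const_mul _ _,
        hprodval n 3 1, hprodval n 2 2, hprodval n 1 3, ih, m2 n, hval n 2, hval n 4]
      have h1 : ∫ ω, ξ n ω ^ 1 ∂ℙ = 0 := by simpa using hξmean n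
      have h2 : ∫ ω, S n ω ^ 1 ∂ℙ = 0 := by simpa using hSmean n
      rw [h1, h2, ← hσ2def, ← hμ4def]
      push_cast
      ring
  -- final bound
  rw [isBigO_iff]
  refine ⟨93 * σ2 ^ 2 + 30 * μ4, ?_⟩
  have hC : (0:ℝ) ≤ 93 * σ2 ^ 2 + 30 * μ4 := by positivity
  filter_upwards [eventually_ge_atTop 2] with n hn
  obtain ⟨m, rfl⟩ : ∃ m, n = m + 1 := ⟨n - 1, by omega⟩
  have hm1 : 1 ≤ m := by omega
  have hM1 : (1:ℝ) ≤ (m:ℝ) := by exact_mod_cast hm1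
  have hM0 : (0:ℝ) < (m:ℝ) := by linarith
  have hN0 : (0:ℝ) < ((m:ℝ)+1) := by linarith
  set M : ℝ := (m:ℝ) with hMdef
  simp only [Nat.add_sub_cancel]
  have hcast : ((m+1:ℕ):ℝ) = M + 1 := by push_cast; ring
  -- pointwise identity
  have hkey : ∀ ω, (R (m+1) ω - R m ω) ^ 2 =
      (M ^ 4 * (M+1) ^ 4)⁻¹ *
        ((M ^ 2 * (2 * (S m ω * ξ m ω) + ξ m ω ^ 2) - (2*M+1) * S m ω ^ 2) ^ 2) := by
    intro ω
    have hsucc : S (m+1) ω = S m ω + ξ m ω := by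
      rw [hSapp, hSapp, sum_range_succ]
    rw [hR, hR, ← hSapp, ← hSapp, hsucc, hcast]
    have h1 : M ≠ 0 := ne_of_gt hM0
    have h2 : M + 1 ≠ 0 := ne_of_gt hN0
    field_simp
    ring
  have e1 : ∫ ω, (R (m+1) ω - R m ω) ^ 2 ∂ℙ
      = (M ^ 4 * (M+1) ^ 4)⁻¹ *
        ∫ ω, (M ^ 2 * (2 * (S m ω * ξ m ω) + ξ m ω ^ 2) - (2*M+1) * S m ω ^ 2) ^ 2 ∂ℙ := by
    simp_rw [hkey]
    exact integral_const_mul _ _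
  -- integrable RHS pieces
  have j1 : Integrable (fun ω => 12 * M ^ 4 * (S m ω ^ 2 * ξ m ω ^ 2)) ℙ :=
    (hprodint m 2 2 (by norm_num) (by norm_num)).const_mul _
  have j2 : Integrable (fun ω => 3 * M ^ 4 * ξ m ω ^ 4) ℙ :=
    (hint m 4 (by norm_num)).const_mul _
  have j3 : Integrable (fun ω => 3 * (2*M+1) ^ 2 * S m ω ^ 4) ℙ :=
    (hS4 m).const_mul _
  have j12 : Integrable (fun ω => 12 * M ^ 4 * (S m ω ^ 2 * ξ m ω ^ 2)
      + 3 * M ^ 4 * ξ m ω ^ 4) ℙ := j1.add j2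
  have j123 : Integrable (fun ω => 12 * M ^ 4 * (S m ω ^ 2 * ξ m ω ^ 2)
      + 3 * M ^ 4 * ξ m ω ^ 4 + 3 * (2*M+1) ^ 2 * S m ω ^ 4) ℙ := j12.add j3
  -- value of RHS integral
  have hv1 : ∫ ω, S m ω ^ 2 * ξ m ω ^ 2 ∂ℙ = (M * σ2) * σ2 := by
    rw [hprodval m 2 2, m2 m, hval m 2, ← hσ2def]
  have hv3 : ∫ ω, S m ω ^ 4 ∂ℙ = M * μ4 + 3 * M * (M - 1) * σ2 ^ 2 := m4 m
  have hv2 : ∫ ω, ξ m ω ^ 4 ∂ℙ = μ4 := by rw [hval m 4, ← hμ4def]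
  have hRHSval : ∫ ω, (12 * M ^ 4 * (S m ω ^ 2 * ξ m ω ^ 2)
      + 3 * M ^ 4 * ξ m ω ^ 4 + 3 * (2*M+1) ^ 2 * S m ω ^ 4) ∂ℙ
      = 12 * M ^ 4 * ((M * σ2) * σ2) + 3 * M ^ 4 * μ4
        + 3 * (2*M+1) ^ 2 * (M * μ4 + 3 * M * (M - 1) * σ2 ^ 2) := by
    rw [integral_add j12 j3, integral_add j1 j2, integral_const_mul _ _,
      integral_const_mul _ _, integral_const_mul _ _, hv1, hv2, hv3]
  -- pointwise bound
  have hptbd : ∀ ω, (M ^ 2 * (2 * (S m ω * ξ m ω) + ξ m ω ^ 2) - (2*M+1) * S m ω ^ 2) ^ 2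
      ≤ 12 * M ^ 4 * (S m ω ^ 2 * ξ m ω ^ 2) + 3 * M ^ 4 * ξ m ω ^ 4
        + 3 * (2*M+1) ^ 2 * S m ω ^ 4 := by
    intro ω
    set x := S m ω
    set y := ξ m ω
    nlinarith [sq_nonneg (2*M^2*x*y - M^2*y^2), sq_nonneg (2*M^2*x*y + (2*M+1)*x^2),
      sq_nonneg (M^2*y^2 + (2*M+1)*x^2)]
  have hIbd : ∫ ω, (M ^ 2 * (2 * (S m ω * ξ m ω) + ξ m ω ^ 2) - (2*M+1) * S m ω ^ 2) ^ 2 ∂ℙ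
      ≤ 12 * M ^ 4 * ((M * σ2) * σ2) + 3 * M ^ 4 * μ4
        + 3 * (2*M+1) ^ 2 * (M * μ4 + 3 * M * (M - 1) * σ2 ^ 2) := by
    rw [← hRHSval]
    exact integral_mono_of_nonneg (ae_of_all _ fun ω => sq_nonneg _) j123
      (ae_of_all _ hptbd)
  have hB : 12 * M ^ 4 * ((M * σ2) * σ2) + 3 * M ^ 4 * μ4
      + 3 * (2*M+1) ^ 2 * (M * μ4 + 3 * M * (M - 1) * σ2 ^ 2)
      ≤ (93 * σ2 ^ 2 + 30 * μ4) * M ^ 5 := by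
    have h9 : 3 * (2*M+1) ^ 2 ≤ 27 * M ^ 2 := by nlinarith
    have hX : 0 ≤ M * μ4 + 3 * M * (M - 1) * σ2 ^ 2 :=
      add_nonneg (mul_nonneg hM0.le hμ4nn)
        (mul_nonneg (by nlinarith : (0:ℝ) ≤ 3 * M * (M - 1)) (sq_nonneg σ2))
    have hstep : 3 * (2*M+1) ^ 2 * (M * μ4 + 3 * M * (M - 1) * σ2 ^ 2)
        ≤ 27 * M ^ 2 * (M * μ4 + 3 * M * (M - 1) * σ2 ^ 2) :=
      mul_le_mul_of_nonneg_right h9 hX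
    have p45 : M ^ 4 ≤ M ^ 5 := pow_le_pow_right₀ hM1 (by norm_num)
    have p35 : M ^ 3 ≤ M ^ 5 := pow_le_pow_right₀ hM1 (by norm_num)
    nlinarith [hstep, mul_le_mul_of_nonneg_left p45 hμ4nn, mul_le_mul_of_nonneg_left p35 hμ4nn,
      mul_le_mul_of_nonneg_left p45 (sq_nonneg σ2),
      mul_nonneg (sq_nonneg σ2) (pow_nonneg hM0.le 3)]
  have hInn : 0 ≤ ∫ ω, (M ^ 2 * (2 * (S m ω * ξ m ω) + ξ m ω ^ 2)
      - (2*M+1) * S m ω ^ 2) ^ 2 ∂ℙ := integral_nonneg (fun ω => sq_nonneg _)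
  have hcinv : (0:ℝ) ≤ (M ^ 4 * (M+1) ^ 4)⁻¹ := by positivity
  have hfinal : ∫ ω, (R (m+1) ω - R m ω) ^ 2 ∂ℙ
      ≤ (93 * σ2 ^ 2 + 30 * μ4) * ((M+1) ^ 3)⁻¹ := by
    rw [e1]
    have step1 : (M ^ 4 * (M+1) ^ 4)⁻¹ *
        (∫ ω, (M ^ 2 * (2 * (S m ω * ξ m ω) + ξ m ω ^ 2) - (2*M+1) * S m ω ^ 2) ^ 2 ∂ℙ)
        ≤ (M ^ 4 * (M+1) ^ 4)⁻¹ * ((93 * σ2 ^ 2 + 30 * μ4) * M ^ 5) :=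
      mul_le_mul_of_nonneg_left (le_trans hIbd hB) hcinv
    refine le_trans step1 ?_
    rw [show (M ^ 4 * (M+1) ^ 4)⁻¹ * ((93 * σ2 ^ 2 + 30 * μ4) * M ^ 5)
        = ((93 * σ2 ^ 2 + 30 * μ4) * M ^ 5) / (M ^ 4 * (M+1) ^ 4) by ring,
      show (93 * σ2 ^ 2 + 30 * μ4) * ((M+1) ^ 3)⁻¹
        = (93 * σ2 ^ 2 + 30 * μ4) / ((M+1) ^ 3) by ring]
    rw [div_le_div_iff₀ (by positivity) (by positivity)]
    nlinarith [mul_nonneg (mul_nonneg hC (pow_nonneg hM0.le 4)) (pow_nonneg hN0.le 3)]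
  have hnn2 : 0 ≤ ∫ ω, (R (m+1) ω - R m ω) ^ 2 ∂ℙ := integral_nonneg (fun ω => sq_nonneg _)
  rw [Real.norm_eq_abs, Real.norm_eq_abs, abs_of_nonneg hnn2, abs_of_nonneg (by positivity :
    (0:ℝ) ≤ (((m+1:ℕ):ℝ) ^ 3)⁻¹), hcast]
  exact hfinal
end

section
/- Let ξ₁, …, ξₙ be i.i.d. centered real random variables with E(ξ₁¹⁶) < ∞ (so that all needed moments exist), and set Rₙ = ((1/n)∑ᵢ₌₁ⁿ ξᵢ)². Then E((Rₙ − Rₙ₋₁)⁴) = O(n⁻⁶) as n → ∞. -/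
open MeasureTheory ProbabilityTheory Finset Filter Asymptotics

open Finset

lemma pow4_add_le (p q : ℝ) : (p + q) ^ 4 ≤ 8 * (p ^ 4 + q ^ 4) := by
  nlinarith [sq_nonneg (p - q), sq_nonneg (p + q), sq_nonneg (p ^ 2 - q ^ 2),
    sq_nonneg (p ^ 2 + q ^ 2), sq_nonneg p, sq_nonneg q, sq_nonneg (p*q)]

lemma abs_add_five (a b c d e : ℝ) : |a+b+c+d+e| ≤ |a|+|b|+|c|+|d|+|e| :=
  le_trans (abs_add_three _ _ _) (add_le_add (add_le_add (abs_add_three a b c) le_rfl) le_rfl)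

lemma abs_add_six (a b c d e f : ℝ) : |a+b+c+d+e+f| ≤ |a|+|b|+|c|+|d|+|e|+|f| :=
  le_trans (abs_add_le _ _) (add_le_add (abs_add_five a b c d e) le_rfl)

lemma abs_add_seven (a b c d e f g : ℝ) : |a+b+c+d+e+f+g| ≤ |a|+|b|+|c|+|d|+|e|+|f|+|g| :=
  le_trans (abs_add_le _ _) (add_le_add (abs_add_six a b c d e f) le_rfl)

lemma term_bd {X Y p q : ℝ} (c : ℝ) (hc : 0 ≤ c) (hX : |X| ≤ p) (hY : |Y| ≤ q) :
    |c * X * Y| ≤ c * p * q := by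
  rw [abs_mul, abs_mul, abs_of_nonneg hc]
  have hp : 0 ≤ p := le_trans (abs_nonneg _) hX
  exact mul_le_mul (mul_le_mul_of_nonneg_left hX hc) hY (abs_nonneg _) (mul_nonneg hc hp)

lemma growth_aux {f : ℕ → ℝ} {C : ℝ} {e : ℕ}
    (h0 : f 0 = 0)
    (hstep : ∀ n : ℕ, |f (n + 1)| ≤ |f n| + C * ((n : ℝ) + 1) ^ e) :
    ∀ n : ℕ, |f n| ≤ C * (n : ℝ) ^ (e + 1) := by
  have hC : 0 ≤ C := by
    have h := hstep 0
    have h1 : (0:ℝ) ≤ |f 1| := abs_nonneg _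
    simp [h0] at h
    linarith
  intro n
  induction n with
  | zero => simp [h0]
  | succ n ih =>
    have hn : (0:ℝ) ≤ (n : ℝ) := Nat.cast_nonneg n
    have key : (n : ℝ) ^ (e + 1) + ((n : ℝ) + 1) ^ e ≤ ((n : ℝ) + 1) ^ (e + 1) := by
      have h1 : (n : ℝ) ^ (e + 1) ≤ ((n : ℝ) + 1) ^ e * (n : ℝ) := by
        rw [pow_succ]
        exact mul_le_mul_of_nonneg_right (pow_le_pow_left₀ hn (by linarith) e) hn
      have h2 : ((n : ℝ) + 1) ^ (e + 1) = ((n : ℝ) + 1) ^ e * (n : ℝ) + ((n : ℝ) + 1) ^ e := by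
        ring
      linarith
    calc |f (n + 1)| ≤ |f n| + C * ((n : ℝ) + 1) ^ e := hstep n
      _ ≤ C * (n : ℝ) ^ (e + 1) + C * ((n : ℝ) + 1) ^ e := by linarith
      _ ≤ C * ((n : ℝ) + 1) ^ (e + 1) := by nlinarith [key]
      _ = C * (((n + 1 : ℕ) : ℝ)) ^ (e + 1) := by push_cast; ring_nf

section MomentRec

variable {E : ℕ → ℕ → ℝ} {μ : ℕ → ℝ}

/-- shorthand for the recursion hypothesis -/
def MRec (E : ℕ → ℕ → ℝ) (μ : ℕ → ℝ) : Prop :=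
  ∀ k, k ≤ 8 → ∀ n, E k (n+1) = ∑ j ∈ range (k+1), E j n * μ (k - j) * (k.choose j : ℝ)

lemma mE1 (hrec : MRec E μ) (hEz : ∀ k, k ≠ 0 → E k 0 = 0) (hE0 : ∀ n, E 0 n = 1)
    (hμ0 : μ 0 = 1) (hμ1 : μ 1 = 0) : ∀ n, E 1 n = 0 := by
  intro n; induction n with
  | zero => exact hEz 1 one_ne_zero
  | succ n ih =>
    rw [hrec 1 (by norm_num) n]
    simp [Finset.sum_range_succ, hμ0, hμ1, hE0, ih]

lemma mE2 (hrec : MRec E μ) (hEz : ∀ k, k ≠ 0 → E k 0 = 0) (hE0 : ∀ n, E 0 n = 1)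
    (hμ0 : μ 0 = 1) (hμ1 : μ 1 = 0) : ∀ n, E 2 n = n * μ 2 := by
  have hE1 := mE1 hrec hEz hE0 hμ0 hμ1
  intro n; induction n with
  | zero => simp [hEz 2 two_ne_zero]
  | succ n ih =>
    rw [hrec 2 (by norm_num) n]
    simp [Finset.sum_range_succ, hμ0, hμ1, hE0, hE1, ih]
    push_cast; ring

lemma mE3 (hrec : MRec E μ) (hEz : ∀ k, k ≠ 0 → E k 0 = 0) (hE0 : ∀ n, E 0 n = 1)
    (hμ0 : μ 0 = 1) (hμ1 : μ 1 = 0) : ∀ n, E 3 n = n * μ 3 := by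
  have hE1 := mE1 hrec hEz hE0 hμ0 hμ1
  have hE2 := mE2 hrec hEz hE0 hμ0 hμ1
  intro n; induction n with
  | zero => simp [hEz 3 (by norm_num)]
  | succ n ih =>
    rw [hrec 3 (by norm_num) n]
    norm_num [Finset.sum_range_succ, hμ0, hμ1, hE0, hE1, hE2, ih, Nat.choose]
    push_cast; ring

lemma mE4rec (hrec : MRec E μ) (hEz : ∀ k, k ≠ 0 → E k 0 = 0) (hE0 : ∀ n, E 0 n = 1)
    (hμ0 : μ 0 = 1) (hμ1 : μ 1 = 0) :
    ∀ n, E 4 (n+1) = E 4 n + 6 * ((n:ℝ) * μ 2) * μ 2 + μ 4 := by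
  have hE1 := mE1 hrec hEz hE0 hμ0 hμ1
  have hE2 := mE2 hrec hEz hE0 hμ0 hμ1
  have hE3 := mE3 hrec hEz hE0 hμ0 hμ1
  intro n
  rw [hrec 4 (by norm_num) n]
  norm_num [Finset.sum_range_succ, hμ0, hμ1, hE0, hE1, hE2, hE3, Nat.choose]
  ring

lemma mE5rec (hrec : MRec E μ) (hEz : ∀ k, k ≠ 0 → E k 0 = 0) (hE0 : ∀ n, E 0 n = 1)
    (hμ0 : μ 0 = 1) (hμ1 : μ 1 = 0) :
    ∀ n, E 5 (n+1) = E 5 n + 20 * ((n:ℝ) * μ 2) * μ 3 + μ 5 := by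
  have hE1 := mE1 hrec hEz hE0 hμ0 hμ1
  have hE2 := mE2 hrec hEz hE0 hμ0 hμ1
  have hE3 := mE3 hrec hEz hE0 hμ0 hμ1
  intro n
  rw [hrec 5 (by norm_num) n]
  norm_num [Finset.sum_range_succ, hμ0, hμ1, hE0, hE1, hE2, hE3, Nat.choose]
  ring

lemma mE6rec (hrec : MRec E μ) (hEz : ∀ k, k ≠ 0 → E k 0 = 0) (hE0 : ∀ n, E 0 n = 1)
    (hμ0 : μ 0 = 1) (hμ1 : μ 1 = 0) :
    ∀ n, E 6 (n+1) = E 6 n + 15 * E 4 n * μ 2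
      + 20 * ((n:ℝ) * μ 3) * μ 3 + 15 * ((n:ℝ) * μ 2) * μ 4 + μ 6 := by
  have hE1 := mE1 hrec hEz hE0 hμ0 hμ1
  have hE2 := mE2 hrec hEz hE0 hμ0 hμ1
  have hE3 := mE3 hrec hEz hE0 hμ0 hμ1
  intro n
  rw [hrec 6 (by norm_num) n]
  norm_num [Finset.sum_range_succ, hμ0, hμ1, hE0, hE1, hE2, hE3, Nat.choose]
  ring

lemma mE7rec (hrec : MRec E μ) (hEz : ∀ k, k ≠ 0 → E k 0 = 0) (hE0 : ∀ n, E 0 n = 1)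
    (hμ0 : μ 0 = 1) (hμ1 : μ 1 = 0) :
    ∀ n, E 7 (n+1) = E 7 n + 21 * E 5 n * μ 2 + 35 * E 4 n * μ 3
      + 35 * ((n:ℝ) * μ 3) * μ 4 + 21 * ((n:ℝ) * μ 2) * μ 5 + μ 7 := by
  have hE1 := mE1 hrec hEz hE0 hμ0 hμ1
  have hE2 := mE2 hrec hEz hE0 hμ0 hμ1
  have hE3 := mE3 hrec hEz hE0 hμ0 hμ1
  intro n
  rw [hrec 7 (by norm_num) n]
  norm_num [Finset.sum_range_succ, hμ0, hμ1, hE0, hE1, hE2, hE3, Nat.choose]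
  ring

lemma mE8rec (hrec : MRec E μ) (hEz : ∀ k, k ≠ 0 → E k 0 = 0) (hE0 : ∀ n, E 0 n = 1)
    (hμ0 : μ 0 = 1) (hμ1 : μ 1 = 0) :
    ∀ n, E 8 (n+1) = E 8 n + 28 * E 6 n * μ 2 + 56 * E 5 n * μ 3
      + 70 * E 4 n * μ 4 + 56 * ((n:ℝ) * μ 3) * μ 5 + 28 * ((n:ℝ) * μ 2) * μ 6 + μ 8 := by
  have hE1 := mE1 hrec hEz hE0 hμ0 hμ1
  have hE2 := mE2 hrec hEz hE0 hμ0 hμ1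
  have hE3 := mE3 hrec hEz hE0 hμ0 hμ1
  intro n
  rw [hrec 8 (by norm_num) n]
  norm_num [Finset.sum_range_succ, hμ0, hμ1, hE0, hE1, hE2, hE3, Nat.choose]
  ring

lemma mB4 (hrec : MRec E μ) (hEz : ∀ k, k ≠ 0 → E k 0 = 0) (hE0 : ∀ n, E 0 n = 1)
    (hμ0 : μ 0 = 1) (hμ1 : μ 1 = 0) {A : ℝ} (hA : ∀ i, i ≤ 8 → |μ i| ≤ A) (hA0 : 0 ≤ A) :
    ∀ n : ℕ, |E 4 n| ≤ (6*A^2 + A) * (n:ℝ)^2 := by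
  have h2A := hA 2 (by norm_num)
  have h4A := hA 4 (by norm_num)
  have hr := mE4rec hrec hEz hE0 hμ0 hμ1
  refine growth_aux (hEz 4 (by norm_num)) fun n => ?_
  rw [hr n]
  have hn : (0:ℝ) ≤ (n:ℝ) := Nat.cast_nonneg n
  have hXn : |(n:ℝ) * μ 2| ≤ (n:ℝ) * A := by
    rw [abs_mul, Nat.abs_cast]; exact mul_le_mul_of_nonneg_left h2A hn
  have ht : |6*((n:ℝ)*μ 2)*μ 2| ≤ 6*((n:ℝ)*A)*A := term_bd 6 (by norm_num) hXn h2A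
  calc |E 4 n + 6*((n:ℝ)*μ 2)*μ 2 + μ 4|
      ≤ |E 4 n| + |6*((n:ℝ)*μ 2)*μ 2| + |μ 4| := abs_add_three _ _ _
    _ ≤ |E 4 n| + (6*A^2 + A)*((n:ℝ)+1)^1 := by nlinarith [ht, h4A, hA0, hn, sq_nonneg A]

lemma mB5 (hrec : MRec E μ) (hEz : ∀ k, k ≠ 0 → E k 0 = 0) (hE0 : ∀ n, E 0 n = 1)
    (hμ0 : μ 0 = 1) (hμ1 : μ 1 = 0) {A : ℝ} (hA : ∀ i, i ≤ 8 → |μ i| ≤ A) (hA0 : 0 ≤ A) :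
    ∀ n : ℕ, |E 5 n| ≤ (20*A^2 + A) * (n:ℝ)^2 := by
  have h2A := hA 2 (by norm_num)
  have h3A := hA 3 (by norm_num)
  have h5A := hA 5 (by norm_num)
  have hr := mE5rec hrec hEz hE0 hμ0 hμ1
  refine growth_aux (hEz 5 (by norm_num)) fun n => ?_
  rw [hr n]
  have hn : (0:ℝ) ≤ (n:ℝ) := Nat.cast_nonneg n
  have hXn : |(n:ℝ) * μ 2| ≤ (n:ℝ) * A := by
    rw [abs_mul, Nat.abs_cast]; exact mul_le_mul_of_nonneg_left h2A hn
  have ht : |20*((n:ℝ)*μ 2)*μ 3| ≤ 20*((n:ℝ)*A)*A := term_bd 20 (by norm_num) hXn h3A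
  calc |E 5 n + 20*((n:ℝ)*μ 2)*μ 3 + μ 5|
      ≤ |E 5 n| + |20*((n:ℝ)*μ 2)*μ 3| + |μ 5| := abs_add_three _ _ _
    _ ≤ |E 5 n| + (20*A^2 + A)*((n:ℝ)+1)^1 := by nlinarith [ht, h5A, hA0, hn, sq_nonneg A]

lemma mB6 (hrec : MRec E μ) (hEz : ∀ k, k ≠ 0 → E k 0 = 0) (hE0 : ∀ n, E 0 n = 1)
    (hμ0 : μ 0 = 1) (hμ1 : μ 1 = 0) {A : ℝ} (hA : ∀ i, i ≤ 8 → |μ i| ≤ A) (hA0 : 0 ≤ A) :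
    ∀ n : ℕ, |E 6 n| ≤ (15*(6*A^2 + A)*A + 35*A^2 + A) * (n:ℝ)^3 := by
  have h2A := hA 2 (by norm_num)
  have h3A := hA 3 (by norm_num)
  have h4A := hA 4 (by norm_num)
  have h6A := hA 6 (by norm_num)
  have hB4 := mB4 hrec hEz hE0 hμ0 hμ1 hA hA0
  have hC40 : (0:ℝ) ≤ 6*A^2 + A := by nlinarith [hA0, sq_nonneg A]
  have hr := mE6rec hrec hEz hE0 hμ0 hμ1
  refine growth_aux (hEz 6 (by norm_num)) fun n => ?_
  rw [hr n]
  have hn : (0:ℝ) ≤ (n:ℝ) := Nat.cast_nonneg n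
  have hX2 : |(n:ℝ) * μ 2| ≤ (n:ℝ) * A := by
    rw [abs_mul, Nat.abs_cast]; exact mul_le_mul_of_nonneg_left h2A hn
  have hX3 : |(n:ℝ) * μ 3| ≤ (n:ℝ) * A := by
    rw [abs_mul, Nat.abs_cast]; exact mul_le_mul_of_nonneg_left h3A hn
  have t1 : |15 * E 4 n * μ 2| ≤ 15*((6*A^2 + A)*(n:ℝ)^2)*A :=
    term_bd 15 (by norm_num) (hB4 n) h2A
  have t2 : |20*((n:ℝ)*μ 3)*μ 3| ≤ 20*((n:ℝ)*A)*A := term_bd 20 (by norm_num) hX3 h3A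
  have t3 : |15*((n:ℝ)*μ 2)*μ 4| ≤ 15*((n:ℝ)*A)*A := term_bd 15 (by norm_num) hX2 h4A
  have e1 : (n:ℝ) ≤ ((n:ℝ)+1)^2 := by nlinarith
  have e2 : (n:ℝ)^2 ≤ ((n:ℝ)+1)^2 := by nlinarith
  have hone : (1:ℝ) ≤ ((n:ℝ)+1)^2 := one_le_pow₀ (by linarith)
  have f1 : 15*((6*A^2 + A)*(n:ℝ)^2)*A ≤ 15*(6*A^2 + A)*A*((n:ℝ)+1)^2 := by
    have hc : (0:ℝ) ≤ 15*(6*A^2 + A)*A := by positivity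
    calc 15*((6*A^2 + A)*(n:ℝ)^2)*A = 15*(6*A^2 + A)*A*((n:ℝ)^2) := by ring
      _ ≤ 15*(6*A^2 + A)*A*(((n:ℝ)+1)^2) := mul_le_mul_of_nonneg_left e2 hc
  have f2 : 20*((n:ℝ)*A)*A ≤ 20*A^2*((n:ℝ)+1)^2 := by
    calc 20*((n:ℝ)*A)*A = 20*A^2*(n:ℝ) := by ring
      _ ≤ 20*A^2*(((n:ℝ)+1)^2) := mul_le_mul_of_nonneg_left e1 (by positivity)
  have f3 : 15*((n:ℝ)*A)*A ≤ 15*A^2*((n:ℝ)+1)^2 := by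
    calc 15*((n:ℝ)*A)*A = 15*A^2*(n:ℝ) := by ring
      _ ≤ 15*A^2*(((n:ℝ)+1)^2) := mul_le_mul_of_nonneg_left e1 (by positivity)
  have f4 : |μ 6| ≤ A*((n:ℝ)+1)^2 := by
    calc |μ 6| ≤ A := h6A
      _ = A * 1 := by ring
      _ ≤ A*(((n:ℝ)+1)^2) := mul_le_mul_of_nonneg_left hone hA0
  calc |E 6 n + 15 * E 4 n * μ 2 + 20*((n:ℝ)*μ 3)*μ 3 + 15*((n:ℝ)*μ 2)*μ 4 + μ 6|
      ≤ |E 6 n| + |15 * E 4 n * μ 2| + |20*((n:ℝ)*μ 3)*μ 3|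
          + |15*((n:ℝ)*μ 2)*μ 4| + |μ 6| := abs_add_five _ _ _ _ _
    _ ≤ |E 6 n| + (15*(6*A^2 + A)*A + 35*A^2 + A)*((n:ℝ)+1)^2 := by
        linarith [t1, t2, t3, f1, f2, f3, f4]

lemma mB8 (hrec : MRec E μ) (hEz : ∀ k, k ≠ 0 → E k 0 = 0) (hE0 : ∀ n, E 0 n = 1)
    (hμ0 : μ 0 = 1) (hμ1 : μ 1 = 0) {A : ℝ} (hA : ∀ i, i ≤ 8 → |μ i| ≤ A) (hA0 : 0 ≤ A) :
    ∀ n : ℕ, |E 8 n| ≤ (28*(15*(6*A^2 + A)*A + 35*A^2 + A)*A + 56*(20*A^2 + A)*A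
      + 70*(6*A^2 + A)*A + 84*A^2 + A) * (n:ℝ)^4 := by
  have h2A := hA 2 (by norm_num)
  have h3A := hA 3 (by norm_num)
  have h4A := hA 4 (by norm_num)
  have h5A := hA 5 (by norm_num)
  have h6A := hA 6 (by norm_num)
  have h8A := hA 8 (by norm_num)
  have hB4 := mB4 hrec hEz hE0 hμ0 hμ1 hA hA0
  have hB5 := mB5 hrec hEz hE0 hμ0 hμ1 hA hA0
  have hB6 := mB6 hrec hEz hE0 hμ0 hμ1 hA hA0
  have hC40 : (0:ℝ) ≤ 6*A^2 + A := by nlinarith [hA0, sq_nonneg A]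
  have hC50 : (0:ℝ) ≤ 20*A^2 + A := by nlinarith [hA0, sq_nonneg A]
  have hC60 : (0:ℝ) ≤ 15*(6*A^2 + A)*A + 35*A^2 + A := by
    nlinarith [hA0, sq_nonneg A, mul_nonneg hC40 hA0]
  have hr := mE8rec hrec hEz hE0 hμ0 hμ1
  refine growth_aux (hEz 8 (by norm_num)) fun n => ?_
  rw [hr n]
  have hn : (0:ℝ) ≤ (n:ℝ) := Nat.cast_nonneg n
  have hX2 : |(n:ℝ) * μ 2| ≤ (n:ℝ) * A := by
    rw [abs_mul, Nat.abs_cast]; exact mul_le_mul_of_nonneg_left h2A hn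
  have hX3 : |(n:ℝ) * μ 3| ≤ (n:ℝ) * A := by
    rw [abs_mul, Nat.abs_cast]; exact mul_le_mul_of_nonneg_left h3A hn
  have t1 : |28 * E 6 n * μ 2| ≤ 28*((15*(6*A^2 + A)*A + 35*A^2 + A)*(n:ℝ)^3)*A :=
    term_bd 28 (by norm_num) (hB6 n) h2A
  have t2 : |56 * E 5 n * μ 3| ≤ 56*((20*A^2 + A)*(n:ℝ)^2)*A :=
    term_bd 56 (by norm_num) (hB5 n) h3A
  have t3 : |70 * E 4 n * μ 4| ≤ 70*((6*A^2 + A)*(n:ℝ)^2)*A :=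
    term_bd 70 (by norm_num) (hB4 n) h4A
  have t4 : |56*((n:ℝ)*μ 3)*μ 5| ≤ 56*((n:ℝ)*A)*A := term_bd 56 (by norm_num) hX3 h5A
  have t5 : |28*((n:ℝ)*μ 2)*μ 6| ≤ 28*((n:ℝ)*A)*A := term_bd 28 (by norm_num) hX2 h6A
  have e1 : (n:ℝ) ≤ ((n:ℝ)+1)^3 := by nlinarith
  have e2 : (n:ℝ)^2 ≤ ((n:ℝ)+1)^3 := by nlinarith
  have e3 : (n:ℝ)^3 ≤ ((n:ℝ)+1)^3 := by nlinarith
  have hone : (1:ℝ) ≤ ((n:ℝ)+1)^3 := one_le_pow₀ (by linarith)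
  have f1 : 28*((15*(6*A^2 + A)*A + 35*A^2 + A)*(n:ℝ)^3)*A
      ≤ 28*(15*(6*A^2 + A)*A + 35*A^2 + A)*A*((n:ℝ)+1)^3 := by
    have hc : (0:ℝ) ≤ 28*(15*(6*A^2 + A)*A + 35*A^2 + A)*A :=
      mul_nonneg (mul_nonneg (by norm_num) hC60) hA0
    calc 28*((15*(6*A^2 + A)*A + 35*A^2 + A)*(n:ℝ)^3)*A
        = 28*(15*(6*A^2 + A)*A + 35*A^2 + A)*A*((n:ℝ)^3) := by ring
      _ ≤ 28*(15*(6*A^2 + A)*A + 35*A^2 + A)*A*(((n:ℝ)+1)^3) :=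
        mul_le_mul_of_nonneg_left e3 hc
  have f2 : 56*((20*A^2 + A)*(n:ℝ)^2)*A ≤ 56*(20*A^2 + A)*A*((n:ℝ)+1)^3 := by
    have hc : (0:ℝ) ≤ 56*(20*A^2 + A)*A := mul_nonneg (mul_nonneg (by norm_num) hC50) hA0
    calc 56*((20*A^2 + A)*(n:ℝ)^2)*A = 56*(20*A^2 + A)*A*((n:ℝ)^2) := by ring
      _ ≤ 56*(20*A^2 + A)*A*(((n:ℝ)+1)^3) := mul_le_mul_of_nonneg_left e2 hc
  have f3 : 70*((6*A^2 + A)*(n:ℝ)^2)*A ≤ 70*(6*A^2 + A)*A*((n:ℝ)+1)^3 := by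
    have hc : (0:ℝ) ≤ 70*(6*A^2 + A)*A := mul_nonneg (mul_nonneg (by norm_num) hC40) hA0
    calc 70*((6*A^2 + A)*(n:ℝ)^2)*A = 70*(6*A^2 + A)*A*((n:ℝ)^2) := by ring
      _ ≤ 70*(6*A^2 + A)*A*(((n:ℝ)+1)^3) := mul_le_mul_of_nonneg_left e2 hc
  have f4 : 56*((n:ℝ)*A)*A ≤ 56*A^2*((n:ℝ)+1)^3 := by
    calc 56*((n:ℝ)*A)*A = 56*A^2*(n:ℝ) := by ring
      _ ≤ 56*A^2*(((n:ℝ)+1)^3) := mul_le_mul_of_nonneg_left e1 (by positivity)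
  have f5 : 28*((n:ℝ)*A)*A ≤ 28*A^2*((n:ℝ)+1)^3 := by
    calc 28*((n:ℝ)*A)*A = 28*A^2*(n:ℝ) := by ring
      _ ≤ 28*A^2*(((n:ℝ)+1)^3) := mul_le_mul_of_nonneg_left e1 (by positivity)
  have f6 : |μ 8| ≤ A*((n:ℝ)+1)^3 := by
    calc |μ 8| ≤ A := h8A
      _ = A * 1 := by ring
      _ ≤ A*(((n:ℝ)+1)^3) := mul_le_mul_of_nonneg_left hone hA0
  calc |E 8 n + 28 * E 6 n * μ 2 + 56 * E 5 n * μ 3 + 70 * E 4 n * μ 4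
        + 56*((n:ℝ)*μ 3)*μ 5 + 28*((n:ℝ)*μ 2)*μ 6 + μ 8|
      ≤ |E 8 n| + |28 * E 6 n * μ 2| + |56 * E 5 n * μ 3| + |70 * E 4 n * μ 4|
          + |56*((n:ℝ)*μ 3)*μ 5| + |28*((n:ℝ)*μ 2)*μ 6| + |μ 8| :=
        abs_add_seven _ _ _ _ _ _ _
    _ ≤ |E 8 n| + (28*(15*(6*A^2 + A)*A + 35*A^2 + A)*A + 56*(20*A^2 + A)*A
          + 70*(6*A^2 + A)*A + 84*A^2 + A)*((n:ℝ)+1)^3 := by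
        linarith [t1, t2, t3, t4, t5, f1, f2, f3, f4, f5, f6]

/-- packaged conclusion: there exist nonnegative constants bounding the 4th and 8th moments. -/
lemma moment_bounds (hrec : MRec E μ) (hEz : ∀ k, k ≠ 0 → E k 0 = 0) (hE0 : ∀ n, E 0 n = 1)
    (hμ0 : μ 0 = 1) (hμ1 : μ 1 = 0) {A : ℝ} (hA : ∀ i, i ≤ 8 → |μ i| ≤ A) (hA0 : 0 ≤ A) :
    ∃ C4 C8 : ℝ, 0 ≤ C4 ∧ 0 ≤ C8 ∧ (∀ n : ℕ, |E 4 n| ≤ C4 * (n:ℝ)^2)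
      ∧ (∀ n : ℕ, |E 8 n| ≤ C8 * (n:ℝ)^4) := by
  refine ⟨_, _, ?_, ?_, mB4 hrec hEz hE0 hμ0 hμ1 hA hA0, mB8 hrec hEz hE0 hμ0 hμ1 hA hA0⟩
  · nlinarith [hA0, sq_nonneg A]
  · have hC40 : (0:ℝ) ≤ 6*A^2 + A := by nlinarith [hA0, sq_nonneg A]
    have hC50 : (0:ℝ) ≤ 20*A^2 + A := by nlinarith [hA0, sq_nonneg A]
    have hC60 : (0:ℝ) ≤ 15*(6*A^2 + A)*A + 35*A^2 + A := by
      nlinarith [hA0, sq_nonneg A, mul_nonneg hC40 hA0]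
    nlinarith [hA0, sq_nonneg A, mul_nonneg hC40 hA0, mul_nonneg hC50 hA0,
      mul_nonneg hC60 hA0]

end MomentRec

lemma final_num {M IG A C4 C8 : ℝ} (hM : 1 ≤ M) (hA : 0 ≤ A) (h4 : 0 ≤ C4) (h8 : 0 ≤ C8)
    (hIG : IG ≤ 1024*M^8*(C4*M^2*A) + 64*M^8*A + 8*(2*M+1)^4*(C8*M^4)) :
    (((M+1)^2*M^2)^4)⁻¹ * IG ≤ (1024*C4*A + 64*A + 512*C8) * ((M+1)^6)⁻¹ := by
  have hM0 : (0:ℝ) < M := by linarith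
  have hd1 : (0:ℝ) < ((M+1)^2*M^2)^4 := by positivity
  have hd2 : (0:ℝ) < (M+1)^6 := by positivity
  rw [inv_mul_eq_div, show (1024*C4*A + 64*A + 512*C8) * ((M+1)^6)⁻¹
    = (1024*C4*A + 64*A + 512*C8) / (M+1)^6 from (div_eq_mul_inv _ _).symm,
    div_le_div_iff₀ hd1 hd2]
  have step1 : IG * (M+1)^6
      ≤ (1024*M^8*(C4*M^2*A) + 64*M^8*A + 8*(2*M+1)^4*(C8*M^4)) * (M+1)^6 :=
    mul_le_mul_of_nonneg_right hIG (by positivity)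
  have g1 : 1024*M^8*(C4*M^2*A)*(M+1)^6 ≤ 1024*C4*A*((M+1)^8*M^8) := by
    have hm2 : M^2 ≤ (M+1)^2 := by nlinarith
    calc 1024*M^8*(C4*M^2*A)*(M+1)^6 = (1024*C4*A*(M^8*(M+1)^6))*(M^2) := by ring
      _ ≤ (1024*C4*A*(M^8*(M+1)^6))*((M+1)^2) :=
        mul_le_mul_of_nonneg_left hm2 (by positivity)
      _ = 1024*C4*A*((M+1)^8*M^8) := by ring
  have g2 : 64*M^8*A*(M+1)^6 ≤ 64*A*((M+1)^8*M^8) := by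
    have h68 : (M+1)^6 ≤ (M+1)^8 := pow_le_pow_right₀ (by linarith) (by norm_num)
    calc 64*M^8*A*(M+1)^6 = (64*A*M^8)*((M+1)^6) := by ring
      _ ≤ (64*A*M^8)*((M+1)^8) := mul_le_mul_of_nonneg_left h68 (by positivity)
      _ = 64*A*((M+1)^8*M^8) := by ring
  have g3 : 8*(2*M+1)^4*(C8*M^4)*(M+1)^6 ≤ 512*C8*((M+1)^8*M^8) := by
    have h24 : (2*M+1)^4 ≤ 16*(M+1)^4 := by
      have := pow_le_pow_left₀ (by linarith : (0:ℝ) ≤ 2*M+1) (by linarith : 2*M+1 ≤ 2*(M+1)) 4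
      calc (2*M+1)^4 ≤ (2*(M+1))^4 := this
        _ = 16*(M+1)^4 := by ring
    have hsq : (M+1)^2 ≤ 4*M^4 := by
      have ha : (M+1)^2 ≤ 4*M^2 := by nlinarith
      have hb : 4*M^2 ≤ 4*M^4 := by nlinarith [sq_nonneg M, sq_nonneg (M*M - 1), hM]
      linarith
    calc 8*(2*M+1)^4*(C8*M^4)*(M+1)^6 = (8*C8*M^4*(M+1)^6)*((2*M+1)^4) := by ring
      _ ≤ (8*C8*M^4*(M+1)^6)*(16*(M+1)^4) := mul_le_mul_of_nonneg_left h24 (by positivity)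
      _ = (128*C8*(M^4*(M+1)^8))*((M+1)^2) := by ring
      _ ≤ (128*C8*(M^4*(M+1)^8))*(4*M^4) := mul_le_mul_of_nonneg_left hsq (by positivity)
      _ = 512*C8*((M+1)^8*M^8) := by ring
  calc IG * (M+1)^6
      ≤ (1024*M^8*(C4*M^2*A) + 64*M^8*A + 8*(2*M+1)^4*(C8*M^4)) * (M+1)^6 := step1
    _ = 1024*M^8*(C4*M^2*A)*(M+1)^6 + 64*M^8*A*(M+1)^6
        + 8*(2*M+1)^4*(C8*M^4)*(M+1)^6 := by ring
    _ ≤ 1024*C4*A*((M+1)^8*M^8) + 64*A*((M+1)^8*M^8) + 512*C8*((M+1)^8*M^8) := by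
        linarith [g1, g2, g3]
    _ = (1024*C4*A + 64*A + 512*C8) * ((M+1)^2*M^2)^4 := by ring
set_option maxHeartbeats 1000000 in
/-- for i.i.d. centered ξ with finite sixteenth moment,
`E((Rₙ − Rₙ₋₁)⁴) = O(n⁻⁶)` where `Rₙ` is the squared sample mean. -/
theorem stmt_4 {Ω : Type*} [MeasureSpace Ω] [IsProbabilityMeasure (ℙ : Measure Ω)]
    (ξ : ℕ → Ω → ℝ)
    (hmeas : ∀ i, Measurable (ξ i))
    (hindep : iIndepFun ξ ℙ)
    (hident : ∀ i, Measure.map (ξ i) ℙ = Measure.map (ξ 0) ℙ)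
    (hcent : ∫ ω, ξ 0 ω ∂ℙ = 0)
    (hmom : Integrable (fun ω => (ξ 0 ω) ^ 16) ℙ)
    (R : ℕ → Ω → ℝ)
    (hR : ∀ n ω, R n ω = (((1 : ℝ) / n) * ∑ i ∈ range n, ξ i ω) ^ 2) :
    (fun n : ℕ => ∫ ω, (R n ω - R (n - 1) ω) ^ 4 ∂ℙ)
      =O[atTop] fun n : ℕ => ((n : ℝ) ^ 6)⁻¹ := by
  classical
  obtain ⟨μk, hμkdef⟩ : ∃ f : ℕ → ℝ, f = fun k => ∫ ω, (ξ 0 ω) ^ k ∂ℙ := ⟨_, rfl⟩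
  -- integrability of powers of ξ 0
  have hint0 : ∀ k, k ≤ 16 → Integrable (fun ω => (ξ 0 ω) ^ k) ℙ := by
    intro k hk
    refine ((integrable_const (1:ℝ)).add hmom).mono
      ((hmeas 0).pow_const k).aestronglyMeasurable (Eventually.of_forall fun ω => ?_)
    have h16 : (0:ℝ) ≤ (ξ 0 ω) ^ 16 := by positivity
    simp only [Pi.add_apply, Real.norm_eq_abs]
    rw [abs_of_nonneg (by linarith : (0:ℝ) ≤ 1 + (ξ 0 ω)^16)]
    rcases le_or_gt (|ξ 0 ω|) 1 with h | h
    · have : |(ξ 0 ω) ^ k| ≤ 1 := by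
        rw [abs_pow]; exact pow_le_one₀ (abs_nonneg _) h
      linarith
    · have h1 : |ξ 0 ω| ^ k ≤ |ξ 0 ω| ^ 16 := pow_le_pow_right₀ h.le hk
      have h2 : |ξ 0 ω| ^ 16 = (ξ 0 ω) ^ 16 := by
        rw [← abs_pow, abs_of_nonneg h16]
      rw [abs_pow]; linarith
  -- integrability of powers of ξ i
  have hφm : ∀ k : ℕ, Measurable (fun x : ℝ => x ^ k) := fun k => measurable_id.pow_const k
  have hinti : ∀ i k, k ≤ 16 → Integrable (fun ω => (ξ i ω) ^ k) ℙ := by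
    intro i k hk
    have h0 : Integrable ((fun x : ℝ => x ^ k) ∘ ξ 0) ℙ := hint0 k hk
    rw [← integrable_map_measure ((hφm k).aestronglyMeasurable) (hmeas 0).aemeasurable] at h0
    rw [← hident i] at h0
    rw [integrable_map_measure ((hφm k).aestronglyMeasurable) (hmeas i).aemeasurable] at h0
    exact h0
  -- moments of ξ i all equal μk
  have hmomi : ∀ i k, (∫ ω, (ξ i ω) ^ k ∂ℙ) = μk k := by
    intro i k
    simp only [hμkdef]
    have h1 : ∫ ω, (ξ i ω) ^ k ∂ℙ = ∫ x, x ^ k ∂(Measure.map (ξ i) ℙ) :=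
      (integral_map (hmeas i).aemeasurable ((hφm k).aestronglyMeasurable)).symm
    rw [h1, hident i, integral_map (hmeas 0).aemeasurable ((hφm k).aestronglyMeasurable)]
  -- the partial sums
  obtain ⟨S, hSdef⟩ : ∃ f : ℕ → Ω → ℝ, f = fun n ω => ∑ i ∈ range n, ξ i ω := ⟨_, rfl⟩
  have hSmeas : ∀ n, Measurable (S n) := by
    intro n; rw [hSdef]; exact Finset.measurable_sum _ (fun i _ => hmeas i)
  have hSsucc : ∀ n ω, S (n + 1) ω = S n ω + ξ n ω := by
    intro n ω; simp [hSdef, Finset.sum_range_succ]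
  have hSindep : ∀ n, IndepFun (S n) (ξ n) ℙ := by
    intro n
    have h := hindep.indepFun_finsetSum_of_notMem hmeas
      (Finset.notMem_range_self (n := n))
    have he : (∑ j ∈ range n, ξ j) = S n := by
      funext ω; simp [hSdef]
    rwa [he] at h
  have hSpow_indep : ∀ n j i, IndepFun (fun ω => (S n ω) ^ j) (fun ω => (ξ n ω) ^ i) ℙ :=
    fun n j i => (hSindep n).comp (measurable_id.pow_const j) (measurable_id.pow_const i)
  -- integrability of powers of S n
  have hSint : ∀ n k, k ≤ 8 → Integrable (fun ω => (S n ω) ^ k) ℙ := by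
    intro n
    induction n with
    | zero =>
      intro k hk
      have : (fun ω => (S 0 ω) ^ k) = fun _ : Ω => (0:ℝ) ^ k := by
        funext ω; simp [hSdef]
      rw [this]; exact integrable_const _
    | succ n ih =>
      intro k hk
      have hexp : (fun ω => (S (n+1) ω) ^ k)
          = fun ω => ∑ j ∈ range (k+1), (S n ω) ^ j * (ξ n ω) ^ (k - j) * (k.choose j : ℝ) := by
        funext ω; rw [hSsucc n ω, add_pow]
      rw [hexp]
      refine integrable_finset_sum _ fun j hj => ?_
      have hj8 : j ≤ 8 := le_trans (Nat.lt_succ_iff.mp (Finset.mem_range.mp hj)) hk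
      exact (((hSpow_indep n j (k - j)).integrable_mul (ih j hj8)
        (hinti n (k - j) (by omega)))).mul_const _
  -- moments of S n
  obtain ⟨E, hEdef⟩ : ∃ f : ℕ → ℕ → ℝ, f = fun k n => ∫ ω, (S n ω) ^ k ∂ℙ := ⟨_, rfl⟩
  have hrec : MRec E μk := by
    intro k hk n
    have hexp : ∀ ω, (S (n+1) ω) ^ k
        = ∑ j ∈ range (k+1), (S n ω) ^ j * (ξ n ω) ^ (k - j) * (k.choose j : ℝ) := by
      intro ω; rw [hSsucc n ω, add_pow]
    have hintterm : ∀ j ∈ range (k+1),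
        Integrable (fun ω => (S n ω) ^ j * (ξ n ω) ^ (k - j) * (k.choose j : ℝ)) ℙ := by
      intro j hj
      have hj8 : j ≤ 8 := le_trans (Nat.lt_succ_iff.mp (Finset.mem_range.mp hj)) hk
      exact ((hSpow_indep n j (k - j)).integrable_mul (hSint n j hj8)
        (hinti n (k - j) (by omega))).mul_const _
    calc E k (n+1) = ∫ ω, ∑ j ∈ range (k+1),
          (S n ω) ^ j * (ξ n ω) ^ (k - j) * (k.choose j : ℝ) ∂ℙ := by
          simp only [hEdef]; exact integral_congr_ae (Eventually.of_forall fun ω => hexp ω)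
      _ = ∑ j ∈ range (k+1), ∫ ω,
          (S n ω) ^ j * (ξ n ω) ^ (k - j) * (k.choose j : ℝ) ∂ℙ :=
          integral_finset_sum _ hintterm
      _ = ∑ j ∈ range (k+1), E j n * μk (k - j) * (k.choose j : ℝ) := by
          refine Finset.sum_congr rfl fun j hj => ?_
          have hj8 : j ≤ 8 := le_trans (Nat.lt_succ_iff.mp (Finset.mem_range.mp hj)) hk
          simp only [hEdef]
          rw [integral_mul_const]
          congr 1
          have := (hSpow_indep n j (k - j)).integral_mul_eq_mul_integral
            (hSint n j hj8).aestronglyMeasurable (hinti n (k - j) (by omega)).aestronglyMeasurable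
          rw [show ((fun ω => (S n ω) ^ j) * fun ω => (ξ n ω) ^ (k - j))
            = fun ω => (S n ω) ^ j * (ξ n ω) ^ (k - j) from rfl] at this
          rw [this, hmomi n (k - j)]
  have hμ0 : μk 0 = 1 := by simp [hμkdef]
  have hμ1 : μk 1 = 0 := by simpa [hμkdef] using hcent
  have hE0 : ∀ n, E 0 n = 1 := by intro n; simp [hEdef]
  have hEz : ∀ k, k ≠ 0 → E k 0 = 0 := by
    intro k hk
    have h : (fun ω => (S 0 ω) ^ k) = fun _ : Ω => (0:ℝ) := by
      funext ω; simp [hSdef, zero_pow hk]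
    simp [hEdef, h]
  -- uniform moment bound
  obtain ⟨A, hAdef⟩ : ∃ a : ℝ, a = ∑ i ∈ range 9, |μk i| := ⟨_, rfl⟩
  have hA : ∀ i, i ≤ 8 → |μk i| ≤ A := by
    intro i hi; rw [hAdef]
    exact Finset.single_le_sum (f := fun j => |μk j|) (fun j _ => abs_nonneg _)
      (Finset.mem_range.mpr (by omega))
  have hA0 : 0 ≤ A := by
    rw [hAdef]; exact Finset.sum_nonneg fun j _ => abs_nonneg _
  obtain ⟨C4, C8, hC40, hC80, hB4, hB8⟩ := moment_bounds hrec hEz hE0 hμ0 hμ1 hA hA0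
  -- final assembly
  rw [isBigO_iff]
  refine ⟨1024*C4*A + 64*A + 512*C8, ?_⟩
  filter_upwards [eventually_ge_atTop 2] with n hn
  obtain ⟨m, rfl⟩ : ∃ m, n = m + 1 := ⟨n - 1, by omega⟩
  have hm1 : 1 ≤ m := by omega
  have hM1 : (1:ℝ) ≤ (m:ℝ) := by exact_mod_cast hm1
  have hMpos : (0:ℝ) < (m:ℝ) := by linarith
  have hMne : (m:ℝ) ≠ 0 := ne_of_gt hMpos
  have hM1ne : (m:ℝ) + 1 ≠ 0 := by positivity
  simp only [Nat.add_sub_cancel]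
  -- pointwise difference formula
  have hΔ : ∀ ω, R (m+1) ω - R m ω
      = ((m:ℝ)^2*(2*(S m ω)*(ξ m ω) + (ξ m ω)^2) - (2*(m:ℝ)+1)*(S m ω)^2)
        / (((m:ℝ)+1)^2*(m:ℝ)^2) := by
    intro ω
    rw [hR (m+1) ω, hR m ω]
    have hSm : ∑ i ∈ range m, ξ i ω = S m ω := by simp [hSdef]
    have hsum : ∑ i ∈ range (m+1), ξ i ω = S m ω + ξ m ω := by
      rw [Finset.sum_range_succ, hSm]
    rw [hsum, hSm]
    push_cast
    field_simp
    ring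
  -- the dominating function
  have hIntP : Integrable (fun ω => (S m ω)^4 * (ξ m ω)^4) ℙ := by
    have := (hSpow_indep m 4 4).integrable_mul (hSint m 4 (by norm_num))
      (hinti m 4 (by norm_num))
    exact this
  have hIntG : Integrable (fun ω => 1024*(m:ℝ)^8*((S m ω)^4*(ξ m ω)^4)
      + 64*(m:ℝ)^8*((ξ m ω)^8) + 8*(2*(m:ℝ)+1)^4*((S m ω)^8)) ℙ :=
    ((hIntP.const_mul _).add ((hinti m 8 (by norm_num)).const_mul _)).add
      ((hSint m 8 le_rfl).const_mul _)
  -- pointwise domination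
  have hpt : ∀ ω, (R (m+1) ω - R m ω)^4
      ≤ ((((m:ℝ)+1)^2*(m:ℝ)^2)^4)⁻¹ * (1024*(m:ℝ)^8*((S m ω)^4*(ξ m ω)^4)
        + 64*(m:ℝ)^8*((ξ m ω)^8) + 8*(2*(m:ℝ)+1)^4*((S m ω)^8)) := by
    intro ω
    rw [hΔ ω, div_pow, div_eq_inv_mul]
    refine mul_le_mul_of_nonneg_left ?_ (by positivity)
    set s := S m ω with hs
    set x := ξ m ω with hx
    have h1 : ((m:ℝ)^2*(2*s*x + x^2) - (2*(m:ℝ)+1)*s^2)^4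
        ≤ 8*(((m:ℝ)^2*(2*s*x + x^2))^4 + ((2*(m:ℝ)+1)*s^2)^4) := by
      calc ((m:ℝ)^2*(2*s*x + x^2) - (2*(m:ℝ)+1)*s^2)^4
          = ((m:ℝ)^2*(2*s*x + x^2) + -((2*(m:ℝ)+1)*s^2))^4 := by ring
        _ ≤ 8*(((m:ℝ)^2*(2*s*x + x^2))^4 + (-((2*(m:ℝ)+1)*s^2))^4) := pow4_add_le _ _
        _ = 8*(((m:ℝ)^2*(2*s*x + x^2))^4 + ((2*(m:ℝ)+1)*s^2)^4) := by ring
    have h2 : (2*s*x + x^2)^4 ≤ 8*(16*(s^4*x^4) + x^8) := by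
      calc (2*s*x + x^2)^4 ≤ 8*((2*s*x)^4 + (x^2)^4) := pow4_add_le _ _
        _ = 8*(16*(s^4*x^4) + x^8) := by ring
    have h3 : 8*(m:ℝ)^8*((2*s*x + x^2)^4) ≤ 8*(m:ℝ)^8*(8*(16*(s^4*x^4) + x^8)) :=
      mul_le_mul_of_nonneg_left h2 (by positivity)
    calc ((m:ℝ)^2*(2*s*x + x^2) - (2*(m:ℝ)+1)*s^2)^4
        ≤ 8*(((m:ℝ)^2*(2*s*x + x^2))^4 + ((2*(m:ℝ)+1)*s^2)^4) := h1
      _ = 8*(m:ℝ)^8*((2*s*x + x^2)^4) + 8*(2*(m:ℝ)+1)^4*(s^8) := by ring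
      _ ≤ 8*(m:ℝ)^8*(8*(16*(s^4*x^4) + x^8)) + 8*(2*(m:ℝ)+1)^4*(s^8) := by linarith [h3]
      _ = 1024*(m:ℝ)^8*(s^4*x^4) + 64*(m:ℝ)^8*(x^8) + 8*(2*(m:ℝ)+1)^4*(s^8) := by ring
  -- integrate
  have h0le : (0 : Ω → ℝ) ≤ᵐ[ℙ] fun ω => (R (m+1) ω - R m ω)^4 :=
    Eventually.of_forall fun ω => by
      simp only [Pi.zero_apply]; positivity
  have hmono : ∫ ω, (R (m+1) ω - R m ω)^4 ∂ℙ
      ≤ ∫ ω, ((((m:ℝ)+1)^2*(m:ℝ)^2)^4)⁻¹ * (1024*(m:ℝ)^8*((S m ω)^4*(ξ m ω)^4)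
        + 64*(m:ℝ)^8*((ξ m ω)^8) + 8*(2*(m:ℝ)+1)^4*((S m ω)^8)) ∂ℙ :=
    integral_mono_of_nonneg h0le (hIntG.const_mul _) (Eventually.of_forall hpt)
  -- compute the dominating integral
  have hPval : ∫ ω, (S m ω)^4 * (ξ m ω)^4 ∂ℙ = E 4 m * μk 4 := by
    have h := (hSpow_indep m 4 4).integral_mul_eq_mul_integral
      (hSint m 4 (by norm_num)).aestronglyMeasurable (hinti m 4 (by norm_num)).aestronglyMeasurable
    rw [show ((fun ω => (S m ω) ^ 4) * fun ω => (ξ m ω) ^ 4)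
      = fun ω => (S m ω) ^ 4 * (ξ m ω) ^ 4 from rfl] at h
    rw [h, hmomi m 4]
    simp only [hEdef]
  have hGval : ∫ ω, (1024*(m:ℝ)^8*((S m ω)^4*(ξ m ω)^4)
      + 64*(m:ℝ)^8*((ξ m ω)^8) + 8*(2*(m:ℝ)+1)^4*((S m ω)^8)) ∂ℙ
      = 1024*(m:ℝ)^8*(E 4 m * μk 4) + 64*(m:ℝ)^8*(μk 8)
        + 8*(2*(m:ℝ)+1)^4*(E 8 m) := by
    have ia : Integrable (fun ω => 1024*(m:ℝ)^8*((S m ω)^4*(ξ m ω)^4)) ℙ :=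
      hIntP.const_mul _
    have ib : Integrable (fun ω => 64*(m:ℝ)^8*((ξ m ω)^8)) ℙ :=
      (hinti m 8 (by norm_num)).const_mul _
    have ic : Integrable (fun ω => 8*(2*(m:ℝ)+1)^4*((S m ω)^8)) ℙ :=
      (hSint m 8 le_rfl).const_mul _
    have iab : Integrable (fun ω => 1024*(m:ℝ)^8*((S m ω)^4*(ξ m ω)^4)
        + 64*(m:ℝ)^8*((ξ m ω)^8)) ℙ := ia.add ib
    rw [integral_add iab ic, integral_add ia ib,
      integral_const_mul, integral_const_mul, integral_const_mul, hPval, hmomi m 8]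
    simp only [hEdef]
  -- the quantitative bound
  have q1 : E 4 m * μk 4 ≤ C4*(m:ℝ)^2*A := by
    calc E 4 m * μk 4 ≤ |E 4 m * μk 4| := le_abs_self _
      _ = |E 4 m| * |μk 4| := abs_mul _ _
      _ ≤ (C4*(m:ℝ)^2)*A :=
        mul_le_mul (hB4 m) (hA 4 (by norm_num)) (abs_nonneg _)
          (mul_nonneg hC40 (by positivity))
  have q2 : μk 8 ≤ A := le_trans (le_abs_self _) (hA 8 (by norm_num))
  have q3 : E 8 m ≤ C8*(m:ℝ)^4 := le_trans (le_abs_self _) (hB8 m)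
  have r1 : 1024*(m:ℝ)^8*(E 4 m * μk 4) ≤ 1024*(m:ℝ)^8*(C4*(m:ℝ)^2*A) :=
    mul_le_mul_of_nonneg_left q1 (by positivity)
  have r2 : 64*(m:ℝ)^8*(μk 8) ≤ 64*(m:ℝ)^8*A :=
    mul_le_mul_of_nonneg_left q2 (by positivity)
  have r3 : 8*(2*(m:ℝ)+1)^4*(E 8 m) ≤ 8*(2*(m:ℝ)+1)^4*(C8*(m:ℝ)^4) :=
    mul_le_mul_of_nonneg_left q3 (by positivity)
  have hIG : 1024*(m:ℝ)^8*(E 4 m * μk 4) + 64*(m:ℝ)^8*(μk 8) + 8*(2*(m:ℝ)+1)^4*(E 8 m)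
      ≤ 1024*(m:ℝ)^8*(C4*(m:ℝ)^2*A) + 64*(m:ℝ)^8*A + 8*(2*(m:ℝ)+1)^4*(C8*(m:ℝ)^4) := by
    linarith [r1, r2, r3]
  have hfin := final_num hM1 hA0 hC40 hC80 hIG
  -- conclude
  have hnonneg : (0:ℝ) ≤ ∫ ω, (R (m+1) ω - R m ω)^4 ∂ℙ :=
    integral_nonneg fun ω => by positivity
  have hcast : ((m+1 : ℕ) : ℝ) = (m:ℝ) + 1 := by push_cast; ring
  rw [Real.norm_eq_abs, Real.norm_eq_abs, abs_of_nonneg hnonneg, hcast,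
    abs_of_nonneg (by positivity : (0:ℝ) ≤ (((m:ℝ)+1)^6)⁻¹)]
  have hd4 : ∫ ω, ((((m:ℝ)+1)^2*(m:ℝ)^2)^4)⁻¹ * (1024*(m:ℝ)^8*((S m ω)^4*(ξ m ω)^4)
        + 64*(m:ℝ)^8*((ξ m ω)^8) + 8*(2*(m:ℝ)+1)^4*((S m ω)^8)) ∂ℙ
      = ((((m:ℝ)+1)^2*(m:ℝ)^2)^4)⁻¹ * (1024*(m:ℝ)^8*(E 4 m * μk 4)
        + 64*(m:ℝ)^8*(μk 8) + 8*(2*(m:ℝ)+1)^4*(E 8 m)) := by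
    rw [integral_const_mul, hGval]
  have hmul : ((((m:ℝ)+1)^2*(m:ℝ)^2)^4)⁻¹ * (1024*(m:ℝ)^8*(E 4 m * μk 4)
        + 64*(m:ℝ)^8*(μk 8) + 8*(2*(m:ℝ)+1)^4*(E 8 m))
      ≤ ((((m:ℝ)+1)^2*(m:ℝ)^2)^4)⁻¹ * (1024*(m:ℝ)^8*(C4*(m:ℝ)^2*A)
        + 64*(m:ℝ)^8*A + 8*(2*(m:ℝ)+1)^4*(C8*(m:ℝ)^4)) :=
    mul_le_mul_of_nonneg_left hIG (by positivity)
  calc ∫ ω, (R (m+1) ω - R m ω)^4 ∂ℙ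
      ≤ ((((m:ℝ)+1)^2*(m:ℝ)^2)^4)⁻¹ * (1024*(m:ℝ)^8*(E 4 m * μk 4)
        + 64*(m:ℝ)^8*(μk 8) + 8*(2*(m:ℝ)+1)^4*(E 8 m)) := by
        rw [← hd4]; exact hmono
    _ ≤ (1024*C4*A + 64*A + 512*C8) * (((m:ℝ)+1)^6)⁻¹ := hfin
end

section
/- Let X_{i1}, …, X_{i n_i}, i = 1, 2, be two independent i.i.d. samples with common mean μ, finite eighth moments, and strictly ordered variances σ₁² < σ₂². Let Sᵢ² = (1/nᵢ)∑ⱼ(X_{ij} − X̄ᵢ)² be the biased sample variances, and suppose n₁ = n₂ = n. Then there exists a constant C such that P(S₁² > S₂²) ≤ C·n⁻² for all n ≥ 2. -/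
set_option maxHeartbeats 1000000

open MeasureTheory ProbabilityTheory Finset

section Aux
lemma abs_pow_le_one_add_pow (w : ℝ) {k m : ℕ} (hk : k ≤ m) : |w|^k ≤ 1 + |w|^m := by
  rcases le_total |w| 1 with h | h
  · have h1 : |w| ^ k ≤ 1 := pow_le_one₀ (abs_nonneg w) h
    have h2 : (0:ℝ) ≤ |w|^m := by positivity
    linarith
  · have h1 : |w| ^ k ≤ |w| ^ m := pow_le_pow_right₀ h hk
    linarith

lemma abs_pow_le_one_add_pow_four (w : ℝ) {k : ℕ} (hk : k ≤ 4) : |w ^ k| ≤ 1 + w ^ 4 := by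
  rw [abs_pow]
  have h := abs_pow_le_one_add_pow w hk
  have h2 : |w| ^ 4 = w ^ 4 := by
    rw [← abs_pow]; exact abs_of_nonneg (by positivity)
  linarith

lemma add3_pow_four_le (p q r : ℝ) : (p + q + r) ^ 4 ≤ 27 * (p^4 + q^4 + r^4) := by
  have h1 : (p + q + r)^2 ≤ 3 * (p^2 + q^2 + r^2) := by
    nlinarith [sq_nonneg (p-q), sq_nonneg (q-r), sq_nonneg (p-r)]
  have h0 : (0:ℝ) ≤ (p+q+r)^2 := sq_nonneg _
  calc (p + q + r)^4 = ((p+q+r)^2)^2 := by ring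
    _ ≤ (3 * (p^2 + q^2 + r^2))^2 := pow_le_pow_left₀ h0 h1 2
    _ = 9 * (p^2+q^2+r^2)^2 := by ring
    _ ≤ 27 * (p^4 + q^4 + r^4) := by
        nlinarith [sq_nonneg (p^2-q^2), sq_nonneg (q^2-r^2), sq_nonneg (p^2-r^2)]

lemma add_pow_eight_le (u v : ℝ) : (u + v) ^ 8 ≤ 128 * (u^8 + v^8) := by
  have h1 : (u + v)^2 ≤ 2 * (u^2 + v^2) := by nlinarith [sq_nonneg (u-v)]
  have h2 : (u^2 + v^2)^2 ≤ 2 * (u^4 + v^4) := by nlinarith [sq_nonneg (u^2-v^2)]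
  have h3 : (u^4 + v^4)^2 ≤ 2 * (u^8 + v^8) := by nlinarith [sq_nonneg (u^4-v^4)]
  have b1 : ((u+v)^2)^2 ≤ (2*(u^2+v^2))^2 := pow_le_pow_left₀ (sq_nonneg _) h1 2
  have b2 : (((u+v)^2)^2)^2 ≤ ((2*(u^2+v^2))^2)^2 := pow_le_pow_left₀ (by positivity) b1 2
  have b4 : ((u^2+v^2)^2)^2 ≤ (2*(u^4+v^4))^2 := pow_le_pow_left₀ (sq_nonneg _) h2 2
  nlinarith [sq_nonneg (u^4+v^4)]
end Aux

section Prob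
variable {Ω : Type*} [MeasureSpace Ω] [IsProbabilityMeasure (ℙ : Measure Ω)]

lemma fourth_moment (W : ℕ → Ω → ℝ) (hmeas : ∀ j, Measurable (W j))
    (hindep : ∀ n, IndepFun (fun ω => ∑ j ∈ range n, W j ω) (W n) ℙ)
    (hid : ∀ j, IdentDistrib (W j) (W 0) ℙ ℙ)
    (hint : ∀ k, k ≤ 4 → Integrable (fun ω => (W 0 ω)^k) ℙ)
    (hmean : ∫ ω, W 0 ω ∂ℙ = 0) (n : ℕ) :
    (∀ k, k ≤ 4 → Integrable (fun ω => (∑ j ∈ range n, W j ω)^k) ℙ) ∧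
    ∫ ω, (∑ j ∈ range n, W j ω) ∂ℙ = 0 ∧
    ∫ ω, (∑ j ∈ range n, W j ω)^2 ∂ℙ = n * ∫ ω, (W 0 ω)^2 ∂ℙ ∧
    ∫ ω, (∑ j ∈ range n, W j ω)^4 ∂ℙ
      ≤ n * ∫ ω, (W 0 ω)^4 ∂ℙ + 3 * n^2 * (∫ ω, (W 0 ω)^2 ∂ℙ)^2 := by
  set m2 := ∫ ω, (W 0 ω)^2 ∂ℙ with hm2
  set m4 := ∫ ω, (W 0 ω)^4 ∂ℙ with hm4
  have hm2nn : 0 ≤ m2 := integral_nonneg fun ω => sq_nonneg _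
  induction n with
  | zero =>
    refine ⟨fun k hk => ?_, by simp, by simp, by simp⟩
    rcases Nat.eq_zero_or_pos k with rfl | hkpos
    · simpa using integrable_const (1:ℝ)
    · simp only [range_zero, sum_empty, zero_pow hkpos.ne']
      exact integrable_const 0
  | succ n ih =>
    obtain ⟨ihint, ih1, ih2, ih4⟩ := ih
    set T : Ω → ℝ := fun ω => ∑ j ∈ range n, W j ω with hT
    set V : Ω → ℝ := fun ω => W n ω with hV
    have hidn : ∀ k : ℕ, IdentDistrib (fun ω => (V ω)^k) (fun ω => (W 0 ω)^k) ℙ ℙ :=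
      fun k => (hid n).comp (measurable_id.pow_const k)
    have hVint : ∀ k, k ≤ 4 → Integrable (fun ω => (V ω)^k) ℙ :=
      fun k hk => (hidn k).integrable_iff.mpr (hint k hk)
    have hVmean : ∫ ω, V ω ∂ℙ = 0 := by
      have := (hid n).integral_eq; simpa [hV] using this.trans hmean
    have hVk : ∀ k : ℕ, ∫ ω, (V ω)^k ∂ℙ = ∫ ω, (W 0 ω)^k ∂ℙ := fun k => (hidn k).integral_eq
    have hIab : ∀ a b : ℕ, IndepFun (fun ω => (T ω)^a) (fun ω => (V ω)^b) ℙ := by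
      intro a b
      exact (hindep n).comp (measurable_id.pow_const a) (measurable_id.pow_const b)
    have hprodint : ∀ a b : ℕ, a ≤ 4 → b ≤ 4 →
        Integrable (fun ω => (T ω)^a * (V ω)^b) ℙ :=
      fun a b ha hb => (hIab a b).integrable_mul (ihint a ha) (hVint b hb)
    have hprodeq : ∀ a b : ℕ, a ≤ 4 → b ≤ 4 →
        ∫ ω, (T ω)^a * (V ω)^b ∂ℙ = (∫ ω, (T ω)^a ∂ℙ) * ∫ ω, (V ω)^b ∂ℙ :=
      fun a b ha hb => (hIab a b).integral_fun_mul_eq_mul_integral (ihint a ha).1 (hVint b hb).1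
    have hsum : ∀ ω, ∑ j ∈ range (n+1), W j ω = T ω + V ω := by
      intro ω; simp [hT, hV, Finset.sum_range_succ]
    have hT1 : ∫ ω, T ω ∂ℙ = 0 := ih1
    have hintsucc : ∀ k, k ≤ 4 → Integrable (fun ω => (T ω + V ω)^k) ℙ := by
      intro k hk
      interval_cases k
      · simpa using integrable_const (1:ℝ)
      · simp only [pow_one]; exact (by simpa using ihint 1 (by norm_num) : Integrable T ℙ).add (by simpa using hVint 1 (by norm_num) : Integrable V ℙ)
      · have : (fun ω => (T ω + V ω)^2)
            = fun ω => (T ω)^2 + 2*((T ω)^1*(V ω)^1) + (V ω)^2 := by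
          funext ω; ring
        rw [this]
        exact ((ihint 2 (by norm_num)).add (((hprodint 1 1 (by norm_num) (by norm_num))).const_mul 2)).add
          (hVint 2 (by norm_num))
      · have : (fun ω => (T ω + V ω)^3)
            = fun ω => (T ω)^3 + 3*((T ω)^2*(V ω)^1) + 3*((T ω)^1*(V ω)^2) + (V ω)^3 := by
          funext ω; ring
        rw [this]
        exact (((ihint 3 (by norm_num)).add ((hprodint 2 1 (by norm_num) (by norm_num)).const_mul 3)).add
          ((hprodint 1 2 (by norm_num) (by norm_num)).const_mul 3)).add (hVint 3 (by norm_num))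
      · have : (fun ω => (T ω + V ω)^4)
            = fun ω => (T ω)^4 + 4*((T ω)^3*(V ω)^1) + 6*((T ω)^2*(V ω)^2)
                + 4*((T ω)^1*(V ω)^3) + (V ω)^4 := by
          funext ω; ring
        rw [this]
        exact ((((ihint 4 (by norm_num)).add ((hprodint 3 1 (by norm_num) (by norm_num)).const_mul 4)).add
          ((hprodint 2 2 (by norm_num) (by norm_num)).const_mul 6)).add
          ((hprodint 1 3 (by norm_num) (by norm_num)).const_mul 4)).add (hVint 4 (by norm_num))
    have iT : Integrable T ℙ := by simpa [pow_one] using ihint 1 (by norm_num)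
    have iV : Integrable V ℙ := by simpa [pow_one] using hVint 1 (by norm_num)
    have hV1 : ∫ ω, (V ω)^1 ∂ℙ = 0 := by simpa [pow_one] using hVmean
    have hV2 : ∫ ω, (V ω)^2 ∂ℙ = m2 := hVk 2
    have hV4 : ∫ ω, (V ω)^4 ∂ℙ = m4 := hVk 4
    have hT2 : ∫ ω, (T ω)^2 ∂ℙ = n * m2 := ih2
    have hT1' : ∫ ω, (T ω)^1 ∂ℙ = 0 := by simpa [pow_one] using hT1
    refine ⟨fun k hk => by
        have e : (fun ω => (∑ j ∈ range (n+1), W j ω)^k) = fun ω => (T ω + V ω)^k :=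
          funext fun ω => by rw [hsum ω]
        rw [e]; exact hintsucc k hk, ?_, ?_, ?_⟩
    · have e : (fun ω => ∑ j ∈ range (n+1), W j ω) = fun ω => T ω + V ω := funext hsum
      rw [e, integral_add iT iV, hT1, hVmean, add_zero]
    · have e : (fun ω => (∑ j ∈ range (n+1), W j ω)^2)
          = fun ω => (T ω)^2 + (2*((T ω)^1*(V ω)^1) + (V ω)^2) := by
        funext ω; rw [hsum ω]; ring
      have g1 : Integrable (fun ω => 2*((T ω)^1*(V ω)^1) + (V ω)^2) ℙ := by
        exact ((hprodint 1 1 (by norm_num) (by norm_num)).const_mul 2).add (hVint 2 (by norm_num))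
      rw [e, integral_add (ihint 2 (by norm_num)) g1,
        integral_add ((hprodint 1 1 (by norm_num) (by norm_num)).const_mul 2) (hVint 2 (by norm_num)),
        MeasureTheory.integral_const_mul, hprodeq 1 1 (by norm_num) (by norm_num), hT2, hV1, hV2]
      push_cast; ring
    · have e : (fun ω => (∑ j ∈ range (n+1), W j ω)^4)
          = fun ω => (T ω)^4 + (4*((T ω)^3*(V ω)^1) + (6*((T ω)^2*(V ω)^2)
              + (4*((T ω)^1*(V ω)^3) + (V ω)^4))) := by
        funext ω; rw [hsum ω]; ring
      have i31 := hprodint 3 1 (by norm_num) (by norm_num)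
      have i22 := hprodint 2 2 (by norm_num) (by norm_num)
      have i13 := hprodint 1 3 (by norm_num) (by norm_num)
      have g1 : Integrable (fun ω => 4*((T ω)^1*(V ω)^3) + (V ω)^4) ℙ := by
        exact (i13.const_mul 4).add (hVint 4 (by norm_num))
      have g2 : Integrable (fun ω => 6*((T ω)^2*(V ω)^2) + (4*((T ω)^1*(V ω)^3) + (V ω)^4)) ℙ := by
        exact (i22.const_mul 6).add g1
      have g3 : Integrable (fun ω => 4*((T ω)^3*(V ω)^1) + (6*((T ω)^2*(V ω)^2)
          + (4*((T ω)^1*(V ω)^3) + (V ω)^4))) ℙ := by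
        exact (i31.const_mul 4).add g2
      rw [e, integral_add (ihint 4 (by norm_num)) g3,
          integral_add (i31.const_mul 4) g2,
          integral_add (i22.const_mul 6) g1,
          integral_add (i13.const_mul 4) (hVint 4 (by norm_num)),
          MeasureTheory.integral_const_mul, MeasureTheory.integral_const_mul, MeasureTheory.integral_const_mul,
          hprodeq 3 1 (by norm_num) (by norm_num), hprodeq 2 2 (by norm_num) (by norm_num),
          hprodeq 1 3 (by norm_num) (by norm_num), hV1, hV2, hV4, hT2, hT1']
      push_cast
      nlinarith [sq_nonneg m2, ih4, hm2nn, Nat.cast_nonneg (α := ℝ) n]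


lemma pair_sum_indep (X1 X2 : ℕ → Ω → ℝ)
    (hmeas1 : ∀ j, Measurable (X1 j)) (hmeas2 : ∀ j, Measurable (X2 j))
    (hindep : iIndepFun (fun i : ℕ ⊕ ℕ => Sum.elim X1 X2 i) ℙ)
    (f : ℝ → ℝ → ℝ) (hf : Measurable fun p : ℝ × ℝ => f p.1 p.2) (n : ℕ) :
    IndepFun (fun ω => ∑ j ∈ range n, f (X1 j ω) (X2 j ω))
      (fun ω => f (X1 n ω) (X2 n ω)) ℙ := by
  classical
  set S : Finset (ℕ ⊕ ℕ) := (range n).image Sum.inl ∪ (range n).image Sum.inr with hS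
  set T : Finset (ℕ ⊕ ℕ) := {Sum.inl n, Sum.inr n} with hTdef
  have hd : Disjoint S T := by
    rw [Finset.disjoint_left]
    intro a ha hb
    simp only [hS, hTdef, Finset.mem_union, Finset.mem_image, Finset.mem_range,
      Finset.mem_insert, Finset.mem_singleton] at ha hb
    rcases hb with rfl | rfl <;> rcases ha with ⟨j, hj, h⟩ | ⟨j, hj, h⟩ <;>
      simp_all <;> omega
  have hm : ∀ i : ℕ ⊕ ℕ, Measurable (Sum.elim X1 X2 i) := by
    rintro (j | j)
    · exact hmeas1 j
    · exact hmeas2 j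
  have base := hindep.indepFun_finset S T hd hm
  have hmem1 : ∀ j : {x // x ∈ range n}, (Sum.inl j.1 : ℕ ⊕ ℕ) ∈ S := fun j =>
    Finset.mem_union_left _ (Finset.mem_image_of_mem _ j.2)
  have hmem2 : ∀ j : {x // x ∈ range n}, (Sum.inr j.1 : ℕ ⊕ ℕ) ∈ S := fun j =>
    Finset.mem_union_right _ (Finset.mem_image_of_mem _ j.2)
  have hT1 : (Sum.inl n : ℕ ⊕ ℕ) ∈ T := by simp [hTdef]
  have hT2 : (Sum.inr n : ℕ ⊕ ℕ) ∈ T := by simp [hTdef]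
  set φ : ({x // x ∈ S} → ℝ) → ℝ :=
    fun v => ∑ j ∈ (range n).attach, f (v ⟨Sum.inl j.1, hmem1 j⟩) (v ⟨Sum.inr j.1, hmem2 j⟩)
      with hφdef
  set ψ : ({x // x ∈ T} → ℝ) → ℝ := fun v => f (v ⟨Sum.inl n, hT1⟩) (v ⟨Sum.inr n, hT2⟩)
      with hψdef
  have hφ : Measurable φ := by
    apply Finset.measurable_sum
    intro j _
    have h1 : Measurable fun v : {x // x ∈ S} → ℝ => v ⟨Sum.inl j.1, hmem1 j⟩ :=
      measurable_pi_apply _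
    have h2 : Measurable fun v : {x // x ∈ S} → ℝ => v ⟨Sum.inr j.1, hmem2 j⟩ :=
      measurable_pi_apply _
    exact hf.comp (h1.prodMk h2)
  have hψ : Measurable ψ := by
    have h1 : Measurable fun v : {x // x ∈ T} → ℝ => v ⟨Sum.inl n, hT1⟩ := measurable_pi_apply _
    have h2 : Measurable fun v : {x // x ∈ T} → ℝ => v ⟨Sum.inr n, hT2⟩ := measurable_pi_apply _
    exact hf.comp (h1.prodMk h2)
  have comp := base.comp hφ hψ
  have e1 : (φ ∘ fun a (i : {x // x ∈ S}) => Sum.elim X1 X2 i.1 a)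
      = fun ω => ∑ j ∈ range n, f (X1 j ω) (X2 j ω) := by
    funext ω
    exact Finset.sum_attach (range n) (fun j => f (X1 j ω) (X2 j ω))
  have e2 : (ψ ∘ fun a (i : {x // x ∈ T}) => Sum.elim X1 X2 i.1 a)
      = fun ω => f (X1 n ω) (X2 n ω) := rfl
  rw [e1, e2] at comp
  exact comp


lemma pair_identDistrib (X1 X2 : ℕ → Ω → ℝ)
    (hmeas1 : ∀ j, Measurable (X1 j)) (hmeas2 : ∀ j, Measurable (X2 j))
    (hindep : iIndepFun (fun i : ℕ ⊕ ℕ => Sum.elim X1 X2 i) ℙ)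
    (hident1 : ∀ j, Measure.map (X1 j) ℙ = Measure.map (X1 0) ℙ)
    (hident2 : ∀ j, Measure.map (X2 j) ℙ = Measure.map (X2 0) ℙ) (j : ℕ) :
    IdentDistrib (fun ω => (X1 j ω, X2 j ω)) (fun ω => (X1 0 ω, X2 0 ω)) ℙ ℙ := by
  have h : ∀ k : ℕ, IndepFun (X1 k) (X2 k) ℙ := fun k =>
    hindep.indepFun (i := Sum.inl k) (j := Sum.inr k) (by simp)
  refine ⟨((hmeas1 j).prodMk (hmeas2 j)).aemeasurable,
    ((hmeas1 0).prodMk (hmeas2 0)).aemeasurable, ?_⟩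
  rw [(indepFun_iff_map_prod_eq_prod_map_map (hmeas1 j).aemeasurable
        (hmeas2 j).aemeasurable).mp (h j), hident1 j, hident2 j,
    ← (indepFun_iff_map_prod_eq_prod_map_map (hmeas1 0).aemeasurable
        (hmeas2 0).aemeasurable).mp (h 0)]


lemma markov_four {g : Ω → ℝ} (hint : Integrable (fun ω => (g ω)^4) ℙ) {ε : ℝ} (hε : 0 < ε) :
    (ℙ {ω | ε ≤ (g ω)^4}).toReal ≤ (∫ ω, (g ω)^4 ∂ℙ) / ε := by
  have h := mul_meas_ge_le_integral_of_nonneg (μ := (ℙ : Measure Ω))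
    (f := fun ω => (g ω)^4) (ae_of_all _ fun ω => by positivity) hint ε
  rw [le_div_iff₀ hε]
  simp only [measureReal_def] at h
  linarith [h]


end Prob

lemma sample_var_eq (n : ℕ) (hn : (n:ℝ) ≠ 0) (x : ℕ → ℝ) (μ : ℝ) :
    (1/(n:ℝ)) * ∑ j ∈ range n, (x j - (1/(n:ℝ)) * ∑ k ∈ range n, x k)^2
      = (1/(n:ℝ)) * ∑ j ∈ range n, (x j - μ)^2
        - ((1/(n:ℝ)) * ∑ j ∈ range n, (x j - μ))^2 := by
  set m := (1/(n:ℝ)) * ∑ j ∈ range n, (x j - μ) with hm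
  have hsum_dev : ∑ j ∈ range n, (x j - μ) = n * m := by rw [hm]; field_simp
  have hxbar : (1/(n:ℝ)) * ∑ k ∈ range n, x k = μ + m := by
    have hs : ∑ k ∈ range n, x k = ∑ k ∈ range n, (x k - μ) + n * μ := by
      rw [Finset.sum_sub_distrib, Finset.sum_const, card_range]; ring
    rw [hs, hsum_dev]; field_simp; ring
  have key : ∀ j, x j - (1/(n:ℝ)) * ∑ k ∈ range n, x k = (x j - μ) - m := by
    intro j; rw [hxbar]; ring
  have expand : ∑ j ∈ range n, (x j - (1/(n:ℝ)) * ∑ k ∈ range n, x k)^2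
      = ∑ j ∈ range n, (x j - μ)^2 - 2*m*∑ j ∈ range n, (x j - μ) + n * m^2 := by
    rw [Finset.sum_congr rfl (fun j _ =>
      show (x j - (1/(n:ℝ)) * ∑ k ∈ range n, x k)^2
          = (x j - μ)^2 - 2*m*(x j - μ) + m^2 by rw [key j]; ring)]
    rw [Finset.sum_add_distrib, Finset.sum_sub_distrib, ← Finset.mul_sum, Finset.sum_const,
      card_range, nsmul_eq_mul]
  rw [expand, hsum_dev, hm]
  field_simp
  ring


/-- for two independent i.i.d. samples of equal size `n` with common
mean, finite eighth moments and strictly ordered variances `σ₁² < σ₂²`, the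
probability that the (biased) sample variances are wrongly ordered is `≤ C·n⁻²`. -/
theorem stmt_5 {Ω : Type*} [MeasureSpace Ω] [IsProbabilityMeasure (ℙ : Measure Ω)]
    (X1 X2 : ℕ → Ω → ℝ)
    (hmeas1 : ∀ j, Measurable (X1 j)) (hmeas2 : ∀ j, Measurable (X2 j))
    (hindep : iIndepFun (fun i : ℕ ⊕ ℕ => Sum.elim X1 X2 i) ℙ)
    (hident1 : ∀ j, Measure.map (X1 j) ℙ = Measure.map (X1 0) ℙ)
    (hident2 : ∀ j, Measure.map (X2 j) ℙ = Measure.map (X2 0) ℙ)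
    (μ : ℝ) (hmean1 : ∫ ω, X1 0 ω ∂ℙ = μ) (hmean2 : ∫ ω, X2 0 ω ∂ℙ = μ)
    (hmom1 : Integrable (fun ω => |X1 0 ω| ^ 8) ℙ)
    (hmom2 : Integrable (fun ω => |X2 0 ω| ^ 8) ℙ)
    (hvar : variance (X1 0) ℙ < variance (X2 0) ℙ) :
    ∃ C : ℝ, ∀ n : ℕ, 2 ≤ n →
      (ℙ {ω |
        ((1 : ℝ) / n) * ∑ j ∈ range n, (X1 j ω - ((1 : ℝ) / n) * ∑ k ∈ range n, X1 k ω) ^ 2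
          >
        ((1 : ℝ) / n) * ∑ j ∈ range n, (X2 j ω - ((1 : ℝ) / n) * ∑ k ∈ range n, X2 k ω) ^ 2
        }).toReal ≤ C / (n : ℝ) ^ 2 := by
  classical
  set σ1 := variance (X1 0) ℙ with hσ1
  set σ2 := variance (X2 0) ℙ with hσ2
  set δ : ℝ := (σ2 - σ1)/4 with hδdef
  have hδ : 0 < δ := by rw [hδdef]; linarith
  set d : ℝ := σ1 - σ2 with hd
  have hδd : 4*δ + d = 0 := by rw [hδdef, hd]; ring
  set fW : ℝ → ℝ → ℝ := fun x y => (x - μ)^2 - (y - μ)^2 - d with hfWdef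
  have hfW : Measurable fun p : ℝ × ℝ => fW p.1 p.2 := by
    simp only [hfWdef]; fun_prop
  set fU : ℝ → ℝ → ℝ := fun _ y => y - μ with hfUdef
  have hfU : Measurable fun p : ℝ × ℝ => fU p.1 p.2 := by
    simp only [hfUdef]; fun_prop
  set W : ℕ → Ω → ℝ := fun j ω => fW (X1 j ω) (X2 j ω) with hWdef
  set U : ℕ → Ω → ℝ := fun j ω => fU (X1 j ω) (X2 j ω) with hUdef
  have hWmeas : ∀ j, Measurable (W j) := fun j => hfW.comp ((hmeas1 j).prodMk (hmeas2 j))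
  have hUmeas : ∀ j, Measurable (U j) := fun j => hfU.comp ((hmeas1 j).prodMk (hmeas2 j))
  have hWindep : ∀ n, IndepFun (fun ω => ∑ j ∈ range n, W j ω) (W n) ℙ := fun n =>
    pair_sum_indep X1 X2 hmeas1 hmeas2 hindep fW hfW n
  have hUindep : ∀ n, IndepFun (fun ω => ∑ j ∈ range n, U j ω) (U n) ℙ := fun n =>
    pair_sum_indep X1 X2 hmeas1 hmeas2 hindep fU hfU n
  have hWid : ∀ j, IdentDistrib (W j) (W 0) ℙ ℙ := fun j =>
    (pair_identDistrib X1 X2 hmeas1 hmeas2 hindep hident1 hident2 j).comp hfW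
  have hUid : ∀ j, IdentDistrib (U j) (U 0) ℙ ℙ := fun j =>
    (pair_identDistrib X1 X2 hmeas1 hmeas2 hindep hident1 hident2 j).comp hfU
  -- integrability of powers of W 0
  have habs1 : ∀ ω, |X1 0 ω|^8 = (X1 0 ω)^8 := fun ω => by
    rw [← abs_pow]; exact abs_of_nonneg (by positivity)
  have habs2 : ∀ ω, |X2 0 ω|^8 = (X2 0 ω)^8 := fun ω => by
    rw [← abs_pow]; exact abs_of_nonneg (by positivity)
  have hW4bound : ∀ ω, (W 0 ω)^4
      ≤ 27*(128*(|X1 0 ω|^8 + |μ|^8) + (128*(|X2 0 ω|^8 + |μ|^8) + d^4)) := by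
    intro ω
    have ha := add_pow_eight_le (X1 0 ω) (-μ)
    have hb := add_pow_eight_le (X2 0 ω) (-μ)
    have h3 := add3_pow_four_le ((X1 0 ω - μ)^2) (-((X2 0 ω - μ)^2)) (-d)
    have hμ : |μ|^8 = μ^8 := by rw [← abs_pow]; exact abs_of_nonneg (by positivity)
    rw [habs1 ω, habs2 ω, hμ]
    have e : (W 0 ω)^4 = ((X1 0 ω - μ)^2 + (-((X2 0 ω - μ)^2)) + (-d))^4 := by
      simp only [hWdef, hfWdef]; ring
    rw [e]
    have q1 : (-((X2 0 ω - μ)^2))^4 = ((X2 0 ω - μ)^2)^4 := by ring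
    have q2 : (-d)^4 = d^4 := by ring
    have q3 : ((X1 0 ω - μ)^2)^4 = (X1 0 ω + -μ)^8 := by ring
    have q4 : ((X2 0 ω - μ)^2)^4 = (X2 0 ω + -μ)^8 := by ring
    have q5 : (-μ)^8 = μ^8 := by ring
    rw [q1, q2, q3, q4] at h3
    rw [q5] at ha hb
    linarith
  have hGint : Integrable (fun ω =>
      1 + 27*(128*(|X1 0 ω|^8 + |μ|^8) + (128*(|X2 0 ω|^8 + |μ|^8) + d^4))) ℙ := by
    exact (integrable_const (1:ℝ)).add
      ((((hmom1.add (integrable_const _)).const_mul 128).add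
        (((hmom2.add (integrable_const _)).const_mul 128).add
          (integrable_const _))).const_mul 27)
  have hWintk : ∀ k, k ≤ 4 → Integrable (fun ω => (W 0 ω)^k) ℙ := by
    intro k hk
    refine Integrable.mono' hGint ((hWmeas 0).pow_const k).aestronglyMeasurable
      (ae_of_all _ fun ω => ?_)
    have h1 := abs_pow_le_one_add_pow_four (W 0 ω) hk
    have h2 := hW4bound ω
    simp only [Real.norm_eq_abs]
    linarith
  -- integrability of powers of U 0
  have hU4bound : ∀ ω, (U 0 ω)^4 ≤ 1 + 128*(|X2 0 ω|^8 + |μ|^8) := by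
    intro ω
    have hb := add_pow_eight_le (X2 0 ω) (-μ)
    have hμ : |μ|^8 = μ^8 := by rw [← abs_pow]; exact abs_of_nonneg (by positivity)
    rw [habs2 ω, hμ]
    have h4 : |U 0 ω|^4 ≤ 1 + |U 0 ω|^8 := abs_pow_le_one_add_pow _ (by norm_num)
    have e4 : |U 0 ω|^4 = (U 0 ω)^4 := by rw [← abs_pow]; exact abs_of_nonneg (by positivity)
    have e8 : |U 0 ω|^8 = (X2 0 ω + (-μ))^8 := by
      rw [← abs_pow]
      have : (U 0 ω)^8 = (X2 0 ω + (-μ))^8 := by simp only [hUdef, hfUdef]; ring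
      rw [this]
      exact abs_of_nonneg (by positivity)
    rw [e4, e8] at h4
    linarith
  have hGUint : Integrable (fun ω => 1 + (1 + 128*(|X2 0 ω|^8 + |μ|^8))) ℙ := by
    exact (integrable_const (1:ℝ)).add
      ((integrable_const (1:ℝ)).add ((hmom2.add (integrable_const _)).const_mul 128))
  have hUintk : ∀ k, k ≤ 4 → Integrable (fun ω => (U 0 ω)^k) ℙ := by
    intro k hk
    refine Integrable.mono' hGUint ((hUmeas 0).pow_const k).aestronglyMeasurable
      (ae_of_all _ fun ω => ?_)
    have h1 := abs_pow_le_one_add_pow_four (U 0 ω) hk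
    have h2 := hU4bound ω
    simp only [Real.norm_eq_abs]
    linarith
  -- means
  have hX2int : Integrable (X2 0) ℙ := by
    refine Integrable.mono' (g := fun ω => 1 + |X2 0 ω|^8)
      ((integrable_const (1:ℝ)).add hmom2) (hmeas2 0).aestronglyMeasurable
      (ae_of_all _ fun ω => ?_)
    have := abs_pow_le_one_add_pow (X2 0 ω) (show 1 ≤ 8 by norm_num)
    simpa using this
  have hUmean : ∫ ω, U 0 ω ∂ℙ = 0 := by
    have : (fun ω => U 0 ω) = fun ω => X2 0 ω - μ := by funext ω; simp [hUdef, hfUdef]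
    rw [this, integral_sub hX2int (integrable_const μ), hmean2, integral_const]
    simp
  -- variance identities
  have hsq1 : Integrable (fun ω => (X1 0 ω)^2) ℙ := by
    refine Integrable.mono' (g := fun ω => 1 + |X1 0 ω|^8)
      ((integrable_const (1:ℝ)).add hmom1) ((hmeas1 0).pow_const 2).aestronglyMeasurable
      (ae_of_all _ fun ω => ?_)
    have := abs_pow_le_one_add_pow (X1 0 ω) (show 2 ≤ 8 by norm_num)
    have e : |X1 0 ω|^2 = |(X1 0 ω)^2| := by rw [abs_pow]
    simp only [Real.norm_eq_abs]
    rw [← e]; exact this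
  have hsq2 : Integrable (fun ω => (X2 0 ω)^2) ℙ := by
    refine Integrable.mono' (g := fun ω => 1 + |X2 0 ω|^8)
      ((integrable_const (1:ℝ)).add hmom2) ((hmeas2 0).pow_const 2).aestronglyMeasurable
      (ae_of_all _ fun ω => ?_)
    have := abs_pow_le_one_add_pow (X2 0 ω) (show 2 ≤ 8 by norm_num)
    have e : |X2 0 ω|^2 = |(X2 0 ω)^2| := by rw [abs_pow]
    simp only [Real.norm_eq_abs]
    rw [← e]; exact this
  have hL21 : MemLp (X1 0) 2 ℙ :=
    (memLp_two_iff_integrable_sq (hmeas1 0).aestronglyMeasurable).mpr hsq1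
  have hL22 : MemLp (X2 0) 2 ℙ :=
    (memLp_two_iff_integrable_sq (hmeas2 0).aestronglyMeasurable).mpr hsq2
  have hv1 : ∫ ω, (X1 0 ω - μ)^2 ∂ℙ = σ1 := by
    rw [hσ1, variance_eq_integral hL21.aemeasurable, hmean1]
  have hv2 : ∫ ω, (X2 0 ω - μ)^2 ∂ℙ = σ2 := by
    rw [hσ2, variance_eq_integral hL22.aemeasurable, hmean2]
  have ha2 : Integrable (fun ω => (X1 0 ω - μ)^2) ℙ := by
    refine Integrable.mono' (g := fun ω => 1 + 128*(|X1 0 ω|^8 + |μ|^8))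
      ((integrable_const (1:ℝ)).add ((hmom1.add (integrable_const _)).const_mul 128))
      (((hmeas1 0).sub_const μ).pow_const 2).aestronglyMeasurable
      (ae_of_all _ fun ω => ?_)
    have ha := add_pow_eight_le (X1 0 ω) (-μ)
    have hμ : |μ|^8 = μ^8 := by rw [← abs_pow]; exact abs_of_nonneg (by positivity)
    have h4 : |(X1 0 ω - μ)^2| ≤ 1 + ((X1 0 ω - μ)^2)^4 := by
      have := abs_pow_le_one_add_pow (X1 0 ω - μ) (show 2 ≤ 8 by norm_num)
      have e1 : |(X1 0 ω - μ)^2| = |X1 0 ω - μ|^2 := by rw [abs_pow]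
      have e2 : |X1 0 ω - μ|^8 = ((X1 0 ω - μ)^2)^4 := by
        rw [← abs_pow]
        have : (X1 0 ω - μ)^8 = ((X1 0 ω - μ)^2)^4 := by ring
        rw [this]; exact abs_of_nonneg (by positivity)
      rw [e1, ← e2]; exact this
    simp only [Real.norm_eq_abs]
    rw [habs1 ω, hμ]
    nlinarith [ha]
  have hb2 : Integrable (fun ω => (X2 0 ω - μ)^2) ℙ := by
    refine Integrable.mono' (g := fun ω => 1 + 128*(|X2 0 ω|^8 + |μ|^8))
      ((integrable_const (1:ℝ)).add ((hmom2.add (integrable_const _)).const_mul 128))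
      (((hmeas2 0).sub_const μ).pow_const 2).aestronglyMeasurable
      (ae_of_all _ fun ω => ?_)
    have ha := add_pow_eight_le (X2 0 ω) (-μ)
    have hμ : |μ|^8 = μ^8 := by rw [← abs_pow]; exact abs_of_nonneg (by positivity)
    have h4 : |(X2 0 ω - μ)^2| ≤ 1 + ((X2 0 ω - μ)^2)^4 := by
      have := abs_pow_le_one_add_pow (X2 0 ω - μ) (show 2 ≤ 8 by norm_num)
      have e1 : |(X2 0 ω - μ)^2| = |X2 0 ω - μ|^2 := by rw [abs_pow]
      have e2 : |X2 0 ω - μ|^8 = ((X2 0 ω - μ)^2)^4 := by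
        rw [← abs_pow]
        have : (X2 0 ω - μ)^8 = ((X2 0 ω - μ)^2)^4 := by ring
        rw [this]; exact abs_of_nonneg (by positivity)
      rw [e1, ← e2]; exact this
    simp only [Real.norm_eq_abs]
    rw [habs2 ω, hμ]
    nlinarith [ha]
  have hWmean : ∫ ω, W 0 ω ∂ℙ = 0 := by
    have e : (fun ω => W 0 ω) = fun ω => ((X1 0 ω - μ)^2 - (X2 0 ω - μ)^2) - d := by
      funext ω; simp [hWdef, hfWdef]
    have hab : Integrable (fun ω => (X1 0 ω - μ)^2 - (X2 0 ω - μ)^2) ℙ := by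
      exact ha2.sub hb2
    rw [e, integral_sub hab (integrable_const d), integral_sub ha2 hb2,
      hv1, hv2, integral_const]
    simp [hd]
  -- moments
  set m2W := ∫ ω, (W 0 ω)^2 ∂ℙ with hm2W
  set m4W := ∫ ω, (W 0 ω)^4 ∂ℙ with hm4W
  set m2U := ∫ ω, (U 0 ω)^2 ∂ℙ with hm2U
  set m4U := ∫ ω, (U 0 ω)^4 ∂ℙ with hm4U
  have hm4Wnn : 0 ≤ m4W := integral_nonneg fun ω => by positivity
  have hm4Unn : 0 ≤ m4U := integral_nonneg fun ω => by positivity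
  set C1 : ℝ := (m4W + 3*m2W^2)/(16*δ^4) with hC1
  set C2 : ℝ := (m4U + 3*m2U^2)/(4*δ^2) with hC2
  refine ⟨C1 + C2, fun n hn => ?_⟩
  have hn2 : (2:ℝ) ≤ (n:ℝ) := by exact_mod_cast hn
  have hn0 : (0:ℝ) < (n:ℝ) := by linarith
  have hnne : ((n:ℝ)) ≠ 0 := ne_of_gt hn0
  obtain ⟨hWint, -, -, hW4⟩ := fourth_moment W hWmeas hWindep hWid hWintk hWmean n
  obtain ⟨hUint, -, -, hU4⟩ := fourth_moment U hUmeas hUindep hUid hUintk hUmean n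
  set A : Set Ω := {ω | (2*δ*(n:ℝ))^4 ≤ (∑ j ∈ range n, W j ω)^4} with hA
  set B : Set Ω := {ω | 4*δ^2*(n:ℝ)^4 ≤ (∑ j ∈ range n, U j ω)^4} with hB
  have hsub : {ω : Ω |
        ((1 : ℝ) / n) * ∑ j ∈ range n, (X1 j ω - ((1 : ℝ) / n) * ∑ k ∈ range n, X1 k ω) ^ 2
          >
        ((1 : ℝ) / n) * ∑ j ∈ range n, (X2 j ω - ((1 : ℝ) / n) * ∑ k ∈ range n, X2 k ω) ^ 2}
      ⊆ A ∪ B := by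
    intro ω hω
    simp only [Set.mem_setOf_eq, gt_iff_lt] at hω
    by_contra hc
    simp only [Set.mem_union, hA, hB, Set.mem_setOf_eq, not_or, not_le] at hc
    obtain ⟨hcA, hcB⟩ := hc
    set TW := ∑ j ∈ range n, W j ω with hTW
    set TU := ∑ j ∈ range n, U j ω with hTU
    have h1 : TW < 2*δ*(n:ℝ) := by
      by_contra h
      push_neg at h
      exact absurd (pow_le_pow_left₀ (by positivity) h 4) (not_le.mpr hcA)
    have h2 : TU^2 < 2*δ*(n:ℝ)^2 := by
      by_contra h
      push_neg at h
      have h' : (2*δ*(n:ℝ)^2)^2 ≤ (TU^2)^2 := pow_le_pow_left₀ (by positivity) h 2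
      have e : (TU^2)^2 = TU^4 := by ring
      rw [e] at h'
      nlinarith [hcB]
    have e1 : (1/(n:ℝ)) * ∑ j ∈ range n, (X1 j ω - (1/(n:ℝ)) * ∑ k ∈ range n, X1 k ω)^2
        = (1/(n:ℝ)) * ∑ j ∈ range n, (X1 j ω - μ)^2
          - ((1/(n:ℝ)) * ∑ j ∈ range n, (X1 j ω - μ))^2 :=
      sample_var_eq n hnne (fun j => X1 j ω) μ
    have e2 : (1/(n:ℝ)) * ∑ j ∈ range n, (X2 j ω - (1/(n:ℝ)) * ∑ k ∈ range n, X2 k ω)^2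
        = (1/(n:ℝ)) * ∑ j ∈ range n, (X2 j ω - μ)^2
          - ((1/(n:ℝ)) * ∑ j ∈ range n, (X2 j ω - μ))^2 :=
      sample_var_eq n hnne (fun j => X2 j ω) μ
    rw [e1, e2] at hω
    set s1 := ∑ j ∈ range n, (X1 j ω - μ)^2 with hs1
    set s2 := ∑ j ∈ range n, (X2 j ω - μ)^2 with hs2
    set t1 := ∑ j ∈ range n, (X1 j ω - μ) with ht1
    have eW : TW = s1 - s2 - (n:ℝ)*d := by
      rw [hTW, hs1, hs2]
      simp only [hWdef, hfWdef]
      rw [Finset.sum_sub_distrib, Finset.sum_sub_distrib, Finset.sum_const, card_range,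
        nsmul_eq_mul]
    have eU : TU = ∑ j ∈ range n, (X2 j ω - μ) := rfl
    set a : ℝ := 1/(n:ℝ) with haa
    have ha : 0 < a := by positivity
    have han : a * (n:ℝ) = 1 := by rw [haa]; field_simp
    rw [← eU] at hω
    -- hω : a*s2 - (a*TU)^2 < a*s1 - (a*t1)^2
    have h1' : a*TW < 2*δ := by
      have := mul_lt_mul_of_pos_left h1 ha
      calc a*TW < a*(2*δ*(n:ℝ)) := this
        _ = 2*δ*(a*(n:ℝ)) := by ring
        _ = 2*δ := by rw [han]; ring
    have h2' : (a*TU)^2 < 2*δ := by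
      have h2'' := mul_lt_mul_of_pos_left h2 (mul_pos ha ha)
      calc (a*TU)^2 = a*a*TU^2 := by ring
        _ < a*a*(2*δ*(n:ℝ)^2) := h2''
        _ = 2*δ*(a*(n:ℝ))^2 := by ring
        _ = 2*δ := by rw [han]; ring
    have hs : a*s1 = a*s2 + a*TW + d := by
      have : s1 = TW + s2 + (n:ℝ)*d := by linarith [eW]
      calc a*s1 = a*TW + a*s2 + (a*(n:ℝ))*d := by rw [this]; ring
        _ = a*s2 + a*TW + d := by rw [han]; ring
    have hM1 : 0 ≤ (a*t1)^2 := sq_nonneg _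
    linarith [hω, h1', h2', hs, hM1, hδd]
  -- measure bound
  have hPA : (ℙ A).toReal ≤ C1 / (n:ℝ)^2 := by
    have hmk := markov_four (g := fun ω => ∑ j ∈ range n, W j ω) (hWint 4 le_rfl)
      (show (0:ℝ) < (2*δ*(n:ℝ))^4 by positivity)
    have hnn : (n:ℝ) ≤ (n:ℝ)^2 := by nlinarith
    have hX : (n:ℝ)*m4W + 3*(n:ℝ)^2*m2W^2 ≤ (m4W + 3*m2W^2)*(n:ℝ)^2 := by
      have := mul_le_mul_of_nonneg_right hnn hm4Wnn
      nlinarith [sq_nonneg m2W]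
    calc (ℙ A).toReal ≤ (∫ ω, (∑ j ∈ range n, W j ω)^4 ∂ℙ)/(2*δ*(n:ℝ))^4 := hmk
      _ ≤ ((n:ℝ)*m4W + 3*(n:ℝ)^2*m2W^2)/(2*δ*(n:ℝ))^4 := by gcongr
      _ ≤ ((m4W + 3*m2W^2)*(n:ℝ)^2)/(2*δ*(n:ℝ))^4 := by gcongr
      _ = C1 / (n:ℝ)^2 := by rw [hC1]; field_simp; ring
  have hPB : (ℙ B).toReal ≤ C2 / (n:ℝ)^2 := by
    have hmk := markov_four (g := fun ω => ∑ j ∈ range n, U j ω) (hUint 4 le_rfl)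
      (show (0:ℝ) < 4*δ^2*(n:ℝ)^4 by positivity)
    have hnn : (n:ℝ) ≤ (n:ℝ)^2 := by nlinarith
    have hX : (n:ℝ)*m4U + 3*(n:ℝ)^2*m2U^2 ≤ (m4U + 3*m2U^2)*(n:ℝ)^2 := by
      have := mul_le_mul_of_nonneg_right hnn hm4Unn
      nlinarith [sq_nonneg m2U]
    calc (ℙ B).toReal ≤ (∫ ω, (∑ j ∈ range n, U j ω)^4 ∂ℙ)/(4*δ^2*(n:ℝ)^4) := hmk
      _ ≤ ((n:ℝ)*m4U + 3*(n:ℝ)^2*m2U^2)/(4*δ^2*(n:ℝ)^4) := by gcongr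
      _ ≤ ((m4U + 3*m2U^2)*(n:ℝ)^2)/(4*δ^2*(n:ℝ)^4) := by gcongr
      _ = C2 / (n:ℝ)^2 := by rw [hC2]; field_simp
  calc (ℙ {ω : Ω |
        ((1 : ℝ) / n) * ∑ j ∈ range n, (X1 j ω - ((1 : ℝ) / n) * ∑ k ∈ range n, X1 k ω) ^ 2
          >
        ((1 : ℝ) / n) * ∑ j ∈ range n, (X2 j ω - ((1 : ℝ) / n) * ∑ k ∈ range n, X2 k ω) ^ 2
        }).toReal
      ≤ (ℙ (A ∪ B)).toReal := ENNReal.toReal_mono (measure_ne_top _ _) (measure_mono hsub)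
    _ ≤ ((ℙ A) + (ℙ B)).toReal := ENNReal.toReal_mono
        (ENNReal.add_ne_top.mpr ⟨measure_ne_top _ _, measure_ne_top _ _⟩) (measure_union_le A B)
    _ = (ℙ A).toReal + (ℙ B).toReal := ENNReal.toReal_add (measure_ne_top _ _) (measure_ne_top _ _)
    _ ≤ C1/(n:ℝ)^2 + C2/(n:ℝ)^2 := add_le_add hPA hPB
    _ = (C1 + C2)/(n:ℝ)^2 := (add_div _ _ _).symm
end

section
/- For equal sample sizes N = n₁ = n₂ and pairs Zⱼ = (X_{1j}, X_{2j}), if T_N = (1/N)∑ⱼ h(Zⱼ) + R_N with h(z) = (h₁(z₁) + h₂(z₂))/2, E(h(Z₁)) = 0, E(h(Z₁)⁴) < ∞, and N·E(R_N²) = o(1), N²·E((R_N − R_{N−1})²) = o(1), then the leave-one-pair-out jackknife estimator σ̂_N²(T) = (N−1)∑ᵢ(T_{N,−i} − T̄_{N,−•})² converges in probability, and in expectation, to σ²(T) = Var(h(Z₁)), as N → ∞. -/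
open MeasureTheory ProbabilityTheory Finset Filter

lemma aux_sum_sq (N : ℕ) (hN : 1 ≤ N) (y : ℕ → ℝ) :
    ∑ i ∈ range N, (y i - (∑ j ∈ range N, y j)/N)^2
      = ∑ i ∈ range N, (y i)^2 - (∑ j ∈ range N, y j)^2/N := by
  have hN' : (N : ℝ) ≠ 0 := by positivity
  set S := ∑ j ∈ range N, y j with hS
  have h1 : ∀ i ∈ range N, (y i - S/N)^2 = (y i)^2 - (2*(S/N))*y i + (S/N)^2 := by
    intro i _; ring
  rw [Finset.sum_congr rfl h1]
  rw [Finset.sum_add_distrib, Finset.sum_sub_distrib, ← Finset.mul_sum, Finset.sum_const,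
    card_range, nsmul_eq_mul, ← hS]
  field_simp
  ring

lemma aux_amgm (C P Q s : ℝ) (hs : 0 < s) (hP : 0 ≤ P) (hQ : 0 ≤ Q)
    (hCsq : C^2 ≤ P*Q) : 2*|C| ≤ s*P + Q/s := by
  have h2 : (0:ℝ) ≤ s*P + Q/s := by positivity
  have h1 : (2*|C|)^2 ≤ (s*P + Q/s)^2 := by
    have hss : s ≠ 0 := ne_of_gt hs
    have key : (s*P)*(Q/s) = P*Q := by field_simp
    nlinarith [sq_nonneg (s*P - Q/s), sq_abs C]
  exact (pow_le_pow_iff_left₀ (by positivity) h2 two_ne_zero).mp h1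



set_option maxHeartbeats 2000000 in
/-- for equal sample sizes, the leave-one-pair-out jackknife estimator
`σ̂_N²(T) = (N−1)∑ᵢ(T_{N,−i} − T̄_{N,−•})²` is consistent (in probability) and
asymptotically unbiased for `σ²(T) = Var(h(Z₁))`, `h(z) = (h₁(z₁)+h₂(z₂))/2`. -/
theorem stmt_13 {Ω : Type*} [MeasureSpace Ω] [IsProbabilityMeasure (ℙ : Measure Ω)]
    (X1 X2 : ℕ → Ω → ℝ) (h₁ h₂ : ℝ → ℝ) (h : ℝ × ℝ → ℝ)
    (hmeas1 : ∀ j, Measurable (X1 j)) (hmeas2 : ∀ j, Measurable (X2 j))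
    (hm : Measurable h)
    (hdef : ∀ z : ℝ × ℝ, h z = (h₁ z.1 + h₂ z.2) / 2)
    -- the pairs Zⱼ = (X_{1j}, X_{2j}) are i.i.d.
    (hindep : iIndepFun (fun j : ℕ => fun ω => (X1 j ω, X2 j ω)) ℙ)
    (hident : ∀ j, Measure.map (fun ω => (X1 j ω, X2 j ω)) ℙ
      = Measure.map (fun ω => (X1 0 ω, X2 0 ω)) ℙ)
    (hcent : ∫ ω, h (X1 0 ω, X2 0 ω) ∂ℙ = 0)
    (hmom : Integrable (fun ω => (h (X1 0 ω, X2 0 ω)) ^ 4) ℙ)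
    (σ2T : ℝ) (hσ2T : σ2T = variance (fun ω => h (X1 0 ω, X2 0 ω)) ℙ)
    -- the statistic, its leave-one-pair-out versions and the remainder terms
    (T R : ℕ → Ω → ℝ) (Tm Rm : ℕ → ℕ → Ω → ℝ)
    (hmeasT : ∀ N, Measurable (T N)) (hmeasTm : ∀ N i, Measurable (Tm N i))
    (hdecomp : ∀ N ω, T N ω =
      ((1 : ℝ) / N) * ∑ j ∈ range N, h (X1 j ω, X2 j ω) + R N ω)
    (hdecompm : ∀ N i ω, i < N → Tm N i ω =
      ((1 : ℝ) / (N - 1)) * ∑ j ∈ (range N).erase i, h (X1 j ω, X2 j ω) + Rm N i ω)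
    (hjoint : ∀ N i, i < N →
      Measure.map (fun ω => (R N ω, Rm N i ω)) ℙ
        = Measure.map (fun ω => (R N ω, R (N - 1) ω)) ℙ)
    (hRint : ∀ N, Integrable (fun ω => (R N ω) ^ 2) ℙ)
    (hR1 : Tendsto (fun N : ℕ => (N : ℝ) * ∫ ω, (R N ω) ^ 2 ∂ℙ) atTop (nhds 0))
    (hR2 : Tendsto (fun N : ℕ => (N : ℝ) ^ 2 * ∫ ω, (R N ω - R (N - 1) ω) ^ 2 ∂ℙ)
      atTop (nhds 0))
    -- the leave-one-pair-out jackknife variance estimator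
    (σhat : ℕ → Ω → ℝ)
    (hσhat : ∀ N ω, σhat N ω = ((N : ℝ) - 1) *
      ∑ i ∈ range N,
        (Tm N i ω - ((1 : ℝ) / N) * ∑ k ∈ range N, Tm N k ω) ^ 2) :
    (∀ ε > 0, Tendsto (fun N : ℕ =>
        ℙ {ω | ε < |σhat N ω - σ2T|}) atTop (nhds 0)) ∧
    Tendsto (fun N : ℕ => ∫ ω, σhat N ω ∂ℙ) atTop (nhds σ2T) := by
  set Y : ℕ → Ω → ℝ := fun j ω => h (X1 j ω, X2 j ω) with hY
  have hmeasY : ∀ j, Measurable (Y j) := fun j => hm.comp ((hmeas1 j).prodMk (hmeas2 j))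
  have identY : ∀ j, IdentDistrib (Y j) (Y 0) ℙ ℙ := by
    intro j
    refine ⟨(hmeasY j).aemeasurable, (hmeasY 0).aemeasurable, ?_⟩
    have h1 := Measure.map_map (μ := ℙ) hm ((hmeas1 j).prodMk (hmeas2 j))
    have h2 := Measure.map_map (μ := ℙ) hm ((hmeas1 0).prodMk (hmeas2 0))
    calc Measure.map (Y j) ℙ = Measure.map h (Measure.map (fun ω => (X1 j ω, X2 j ω)) ℙ) := h1.symm
      _ = Measure.map h (Measure.map (fun ω => (X1 0 ω, X2 0 ω)) ℙ) := by rw [hident j]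
      _ = Measure.map (Y 0) ℙ := h2
  -- independence
  have indepY : ∀ i j : ℕ, i ≠ j → IndepFun (Y i) (Y j) ℙ :=
    fun i j hij => (hindep.comp (fun _ => h) (fun _ => hm)).indepFun hij
  -- moments
  have mY0sq2 : MemLp (fun ω => (Y 0 ω)^2) 2 ℙ := by
    refine (memLp_two_iff_integrable_sq ?_).2 ?_
    · exact ((hmeasY 0).pow_const 2).aestronglyMeasurable
    · have : (fun ω => ((Y 0 ω)^2)^2) = fun ω => (Y 0 ω)^4 := by funext ω; ring
      rw [this]; exact hmom
  have mY0sqInt : Integrable (fun ω => (Y 0 ω)^2) ℙ := mY0sq2.integrable one_le_two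
  have mY0L2 : MemLp (Y 0) 2 ℙ :=
    (memLp_two_iff_integrable_sq (hmeasY 0).aestronglyMeasurable).2 mY0sqInt
  have mYL2 : ∀ j, MemLp (Y j) 2 ℙ := fun j => (identY j).memLp_iff.2 mY0L2
  have mYInt : ∀ j, Integrable (Y j) ℙ := fun j => (mYL2 j).integrable one_le_two
  have mYsqInt : ∀ j, Integrable (fun ω => (Y j ω)^2) ℙ := fun j => (mYL2 j).integrable_sq
  have hEY : ∀ j, ∫ ω, Y j ω ∂ℙ = 0 := fun j => by rw [(identY j).integral_eq]; exact hcent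
  have hEY2 : ∫ ω, (Y 0 ω)^2 ∂ℙ = σ2T := by
    have hv := variance_eq_sub mY0L2
    rw [hσ2T]
    have h0 : (ℙ : Measure Ω)[Y 0] = 0 := hEY 0
    simp only [Pi.pow_apply] at hv
    rw [hv, h0]
    ring
  have identYsq : ∀ j, IdentDistrib (fun ω => (Y j ω)^2) (fun ω => (Y 0 ω)^2) ℙ ℙ :=
    fun j => (identY j).comp (measurable_id.pow_const 2)
  have hEYsq : ∀ j, ∫ ω, (Y j ω)^2 ∂ℙ = σ2T := fun j => by
    rw [(identYsq j).integral_eq]; exact hEY2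
  -- sums
  set S : ℕ → Ω → ℝ := fun N ω => ∑ j ∈ range N, Y j ω with hSdef
  have hmeasS : ∀ N, Measurable (S N) := fun N => Finset.measurable_sum _ (fun j _ => hmeasY j)
  have mSL2 : ∀ N, MemLp (S N) 2 ℙ := by
    intro N
    have : S N = ∑ j ∈ range N, Y j := by funext ω; simp [hSdef, Finset.sum_apply]
    rw [this]
    exact memLp_finset_sum' _ (fun j _ => mYL2 j)
  have hES : ∀ N, ∫ ω, S N ω ∂ℙ = 0 := by
    intro N
    have : ∫ ω, S N ω ∂ℙ = ∑ j ∈ range N, ∫ ω, Y j ω ∂ℙ :=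
      integral_finset_sum _ (fun j _ => mYInt j)
    rw [this]
    simp [hEY]
  have hES2 : ∀ N, ∫ ω, (S N ω)^2 ∂ℙ = N * σ2T := by
    intro N
    have hsum : S N = ∑ j ∈ range N, Y j := by funext ω; simp [hSdef, Finset.sum_apply]
    have hv := variance_eq_sub (mSL2 N)
    simp only [Pi.pow_apply] at hv
    have h0 : (ℙ : Measure Ω)[S N] = 0 := hES N
    have hvs : variance (S N) ℙ = N * σ2T := by
      rw [hsum, IndepFun.variance_sum (fun i _ => mYL2 i)
        (fun i _ j _ hij => indepY i j hij)]
      simp only [hσ2T]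
      rw [Finset.sum_congr rfl (fun i _ => (identY i).variance_eq)]
      simp [mul_comm]
      exact Or.inl rfl
    rw [← hvs, hv, h0]
    ring
  -- empirical variance
  set A : ℕ → Ω → ℝ := fun N ω =>
    (1/((N:ℝ)-1)) * (∑ i ∈ range N, (Y i ω)^2 - (S N ω)^2/N) with hAdef
  have hmeasA : ∀ N, Measurable (A N) := by
    intro N
    apply Measurable.const_mul
    exact (Finset.measurable_sum _ (fun i _ => (hmeasY i).pow_const 2)).sub
      (((hmeasS N).pow_const 2).div_const _)
  -- SLLN
  have slln1 : ∀ᵐ ω ∂ℙ, Tendsto (fun N : ℕ => ((N:ℝ))⁻¹ • (S N ω)) atTop (nhds 0) := by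
    have := strong_law_ae Y (mYInt 0) (fun i j hij => indepY i j hij) identY
    filter_upwards [this] with ω hω
    rw [hEY 0] at hω
    exact hω
  have slln2 : ∀ᵐ ω ∂ℙ, Tendsto (fun N : ℕ => ((N:ℝ))⁻¹ • (∑ i ∈ range N, (Y i ω)^2))
      atTop (nhds σ2T) := by
    have hind : Pairwise (Function.onFun (IndepFun · · ℙ) (fun j ω => (Y j ω)^2)) := by
      intro i j hij
      exact (hindep.comp (fun _ => (fun x : ℝ => x^2) ∘ h)
        (fun _ => (measurable_id.pow_const 2).comp hm)).indepFun hij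
    have := strong_law_ae (fun j ω => (Y j ω)^2) (mY0sqInt) hind identYsq
    filter_upwards [this] with ω hω
    rw [hEY2] at hω
    exact hω
  have hAae : ∀ᵐ ω ∂ℙ, Tendsto (fun N : ℕ => A N ω) atTop (nhds σ2T) := by
    filter_upwards [slln1, slln2] with ω h1 h2
    have hfrac : Tendsto (fun N : ℕ => (N:ℝ)/((N:ℝ)-1)) atTop (nhds 1) := by
      have h3 : Tendsto (fun N : ℕ => ((N:ℝ)-1)) atTop atTop :=
        tendsto_atTop_add_const_right _ _ tendsto_natCast_atTop_atTop
      have h4 : Tendsto (fun N : ℕ => ((N:ℝ)-1)⁻¹) atTop (nhds 0) := h3.inv_tendsto_atTop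
      have h5 : Tendsto (fun N : ℕ => 1 + ((N:ℝ)-1)⁻¹) atTop (nhds (1 + 0)) :=
        tendsto_const_nhds.add h4
      rw [add_zero] at h5
      apply h5.congr'
      filter_upwards [eventually_ge_atTop 2] with N hN
      have : ((N:ℝ)-1) ≠ 0 := by
        have : (2:ℝ) ≤ N := by exact_mod_cast hN
        linarith
      field_simp; ring
    have key : Tendsto (fun N : ℕ =>
        ((N:ℝ)/((N:ℝ)-1)) * (((N:ℝ))⁻¹ • (∑ i ∈ range N, (Y i ω)^2)
          - (((N:ℝ))⁻¹ • (S N ω))^2)) atTop (nhds (1 * (σ2T - 0^2))) :=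
      hfrac.mul ((h2.sub (h1.pow 2)))
    simp only [one_mul, ne_eq, OfNat.ofNat_ne_zero, not_false_eq_true, zero_pow, sub_zero] at key
    apply key.congr'
    filter_upwards [eventually_ge_atTop 2] with N hN
    have hN0 : (N:ℝ) ≠ 0 := by positivity
    have hN1 : ((N:ℝ)-1) ≠ 0 := by
      have : (2:ℝ) ≤ N := by exact_mod_cast hN
      linarith
    simp only [smul_eq_mul, hAdef]
    field_simp
  -- A: form, nonneg, integral
  have hAform : ∀ N, 1 ≤ N → ∀ ω, A N ω =
      (1/((N:ℝ)-1)) * ∑ i ∈ range N, (Y i ω - S N ω/N)^2 := by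
    intro N hN ω
    rw [hAdef]
    simp only
    rw [aux_sum_sq N hN (fun i => Y i ω)]
  have hAnonneg : ∀ N, 2 ≤ N → ∀ ω, 0 ≤ A N ω := by
    intro N hN ω
    rw [hAform N (by omega) ω]
    have h2N : (2:ℝ) ≤ N := by exact_mod_cast hN
    have : (0:ℝ) ≤ 1/((N:ℝ)-1) := by
      apply div_nonneg zero_le_one
      linarith
    exact mul_nonneg this (Finset.sum_nonneg (fun i _ => sq_nonneg _))
  have hAint : ∀ N, Integrable (A N) ℙ := by
    intro N
    apply Integrable.const_mul
    exact (integrable_finset_sum _ (fun i _ => mYsqInt i)).sub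
      (((mSL2 N).integrable_sq).div_const _)
  have hEA : ∀ N, 2 ≤ N → ∫ ω, A N ω ∂ℙ = σ2T := by
    intro N hN
    have hN1 : ((N:ℝ)-1) ≠ 0 := by
      have : (2:ℝ) ≤ N := by exact_mod_cast hN
      linarith
    have hint : ∫ ω, (∑ i ∈ range N, (Y i ω)^2 - (S N ω)^2/N) ∂ℙ
        = N * σ2T - (N * σ2T)/N := by
      rw [integral_sub (integrable_finset_sum _ (fun i _ => mYsqInt i))
        (((mSL2 N).integrable_sq).div_const _)]
      rw [integral_finset_sum _ (fun i _ => mYsqInt i), integral_div, hES2 N]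
      rw [Finset.sum_congr rfl (fun i _ => hEYsq i)]
      simp
    calc ∫ ω, A N ω ∂ℙ = (1/((N:ℝ)-1)) * ∫ ω, (∑ i ∈ range N, (Y i ω)^2 - (S N ω)^2/N) ∂ℙ := by
          rw [hAdef]; exact integral_const_mul _ _
      _ = σ2T := by
          rw [hint]
          have hN0 : (N:ℝ) ≠ 0 := Nat.cast_ne_zero.2 (by omega)
          field_simp
  -- remainder machinery
  have hhY : ∀ j ω, h (X1 j ω, X2 j ω) = Y j ω := fun j ω => rfl
  have hmeasR : ∀ N, Measurable (R N) := by
    intro N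
    have : R N = fun ω => T N ω - ((1:ℝ)/N) * S N ω := by
      funext ω
      have := hdecomp N ω
      simp only [hhY] at this
      rw [this, hSdef]
      ring
    rw [this]
    exact (hmeasT N).sub (((hmeasS N).const_mul _))
  have hmeasRm : ∀ N i, i < N → Measurable (Rm N i) := by
    intro N i hi
    have : Rm N i = fun ω => Tm N i ω - ((1:ℝ)/((N:ℝ)-1)) * ∑ j ∈ (range N).erase i, Y j ω := by
      funext ω
      have := hdecompm N i ω hi
      simp only [hhY] at this
      rw [this]
      ring
    rw [this]
    exact (hmeasTm N i).sub ((Finset.measurable_sum _ (fun j _ => hmeasY j)).const_mul _)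
  have mRL2 : ∀ N, MemLp (R N) 2 ℙ := fun N =>
    (memLp_two_iff_integrable_sq (hmeasR N).aestronglyMeasurable).2 (hRint N)
  have identRm : ∀ N i, i < N →
      IdentDistrib (fun ω => Rm N i ω - R N ω) (fun ω => R (N-1) ω - R N ω) ℙ ℙ := by
    intro N i hi
    have hu : Measurable (fun p : ℝ × ℝ => p.2 - p.1) := measurable_snd.sub measurable_fst
    have hp1 : Measurable (fun ω => (R N ω, Rm N i ω)) := (hmeasR N).prodMk (hmeasRm N i hi)
    have hp2 : Measurable (fun ω => (R N ω, R (N-1) ω)) := (hmeasR N).prodMk (hmeasR (N-1))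
    refine ⟨((hmeasRm N i hi).sub (hmeasR N)).aemeasurable,
      ((hmeasR (N-1)).sub (hmeasR N)).aemeasurable, ?_⟩
    calc Measure.map (fun ω => Rm N i ω - R N ω) ℙ
        = Measure.map (fun p : ℝ × ℝ => p.2 - p.1) (Measure.map (fun ω => (R N ω, Rm N i ω)) ℙ) :=
          (Measure.map_map (μ := ℙ) hu hp1).symm
      _ = Measure.map (fun p : ℝ × ℝ => p.2 - p.1) (Measure.map (fun ω => (R N ω, R (N-1) ω)) ℙ) := by
          rw [hjoint N i hi]
      _ = Measure.map (fun ω => R (N-1) ω - R N ω) ℙ := Measure.map_map (μ := ℙ) hu hp2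
  have mdiffL2 : ∀ N : ℕ, MemLp (fun ω => R (N-1) ω - R N ω) 2 ℙ := fun N =>
    (mRL2 (N-1)).sub (mRL2 N)
  have mRmRL2 : ∀ N i, i < N → MemLp (fun ω => Rm N i ω - R N ω) 2 ℙ := fun N i hi =>
    (identRm N i hi).memLp_iff.2 (mdiffL2 N)
  have mRmL2 : ∀ N i, i < N → MemLp (Rm N i) 2 ℙ := by
    intro N i hi
    have : Rm N i = fun ω => (Rm N i ω - R N ω) + R N ω := by funext ω; ring
    rw [this]
    exact (mRmRL2 N i hi).add (mRL2 N)
  have hERmR : ∀ N i, i < N → ∫ ω, (Rm N i ω - R N ω)^2 ∂ℙ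
      = ∫ ω, (R N ω - R (N-1) ω)^2 ∂ℙ := by
    intro N i hi
    have h1 := ((identRm N i hi).comp (measurable_id.pow_const 2)).integral_eq
    simp only [Function.comp_def, id_eq] at h1
    rw [h1]
    congr 1
    funext ω
    ring
  have hdiffInt : ∀ N : ℕ, Integrable (fun ω => (R (N-1) ω - R N ω)^2) ℙ := fun N =>
    (mdiffL2 N).integrable_sq
  have hRmRInt : ∀ N i, i < N → Integrable (fun ω => (Rm N i ω - R N ω)^2) ℙ := fun N i hi =>
    (mRmRL2 N i hi).integrable_sq
  -- D, B, C, G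
  set D : ℕ → ℕ → Ω → ℝ := fun N i ω => Rm N i ω - ((1:ℝ)/N) * ∑ k ∈ range N, Rm N k ω
    with hDdef
  set B : ℕ → Ω → ℝ := fun N ω => ((N:ℝ)-1) * ∑ i ∈ range N, (D N i ω)^2 with hBdef
  set C : ℕ → Ω → ℝ := fun N ω => ∑ i ∈ range N, (S N ω/N - Y i ω) * D N i ω with hCdef
  set G : ℕ → Ω → ℝ := fun N ω => σhat N ω - A N ω with hGdef
  -- the key pointwise decomposition
  have hkey : ∀ N, 2 ≤ N → ∀ ω, σhat N ω = A N ω + (2 * C N ω + B N ω) := by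
    intro N hN ω
    have hN0 : (N:ℝ) ≠ 0 := Nat.cast_ne_zero.2 (by omega)
    have hN1 : ((N:ℝ)-1) ≠ 0 := by
      have : (2:ℝ) ≤ N := by exact_mod_cast hN
      linarith
    have hTm : ∀ i ∈ range N, Tm N i ω
        = (1/((N:ℝ)-1)) * (S N ω - Y i ω) + Rm N i ω := by
      intro i hi
      rw [hdecompm N i ω (mem_range.1 hi)]
      simp only [hhY]
      rw [Finset.sum_erase_eq_sub hi]
    have hMean : ((1:ℝ)/N) * ∑ k ∈ range N, Tm N k ω
        = S N ω/N + ((1:ℝ)/N) * ∑ k ∈ range N, Rm N k ω := by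
      rw [Finset.sum_congr rfl hTm, Finset.sum_add_distrib, ← Finset.mul_sum,
        Finset.sum_sub_distrib, Finset.sum_const, card_range, nsmul_eq_mul]
      have hSY : ∑ k ∈ range N, Y k ω = S N ω := rfl
      rw [hSY]
      field_simp
    have hTerm : ∀ i ∈ range N, Tm N i ω - ((1:ℝ)/N) * ∑ k ∈ range N, Tm N k ω
        = (S N ω/N - Y i ω)/((N:ℝ)-1) + D N i ω := by
      intro i hi
      rw [hTm i hi, hMean, hDdef]
      simp only
      field_simp
      ring
    rw [hσhat N ω, Finset.sum_congr rfl (fun i hi => by rw [hTerm i hi])]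
    have expand : ∀ i ∈ range N,
        ((S N ω/N - Y i ω)/((N:ℝ)-1) + D N i ω)^2
          = (1/((N:ℝ)-1)^2)*(S N ω/N - Y i ω)^2
            + (2/((N:ℝ)-1))*((S N ω/N - Y i ω) * D N i ω) + (D N i ω)^2 := by
      intro i hi
      field_simp
      ring
    rw [Finset.sum_congr rfl expand, Finset.sum_add_distrib, Finset.sum_add_distrib,
      ← Finset.mul_sum, ← Finset.mul_sum]
    have hAform2 : A N ω = (1/((N:ℝ)-1)) * ∑ i ∈ range N, (S N ω/N - Y i ω)^2 := by
      rw [hAform N (by omega) ω]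
      congr 1
      exact Finset.sum_congr rfl (fun i _ => by ring)
    rw [hAform2, hBdef, hCdef]
    simp only
    field_simp
    ring
  -- measurability and integrability of D, B
  have hmeasRmSum : ∀ N, Measurable (fun ω => ∑ k ∈ range N, Rm N k ω) := by
    intro N
    exact Finset.measurable_sum _ (fun k hk => hmeasRm N k (mem_range.1 hk))
  have hmeasD : ∀ N i, i < N → Measurable (D N i) := by
    intro N i hi
    exact (hmeasRm N i hi).sub ((hmeasRmSum N).const_mul _)
  have mDL2 : ∀ N i, i < N → MemLp (D N i) 2 ℙ := by
    intro N i hi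
    have hsum : MemLp (fun ω => ∑ k ∈ range N, Rm N k ω) 2 ℙ := by
      have : (fun ω => ∑ k ∈ range N, Rm N k ω) = ∑ k ∈ range N, Rm N k := by
        funext ω; simp [Finset.sum_apply]
      rw [this]
      exact memLp_finset_sum' _ (fun k hk => mRmL2 N k (mem_range.1 hk))
    exact (mRmL2 N i hi).sub (hsum.const_mul _)
  have hBint : ∀ N, 2 ≤ N → Integrable (B N) ℙ := by
    intro N hN
    apply Integrable.const_mul
    exact integrable_finset_sum _ (fun i hi => (mDL2 N i (mem_range.1 hi)).integrable_sq)
  have hBnonneg : ∀ N, 2 ≤ N → ∀ ω, 0 ≤ B N ω := by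
    intro N hN ω
    have h2N : (2:ℝ) ≤ N := by exact_mod_cast hN
    exact mul_nonneg (by linarith) (Finset.sum_nonneg (fun i _ => sq_nonneg _))
  -- quantities
  set q : ℕ → ℝ := fun N => ∫ ω, (R N ω - R (N-1) ω)^2 ∂ℙ with hqdef
  have hqnonneg : ∀ N, 0 ≤ q N := fun N => integral_nonneg (fun ω => sq_nonneg _)
  set b : ℕ → ℝ := fun N => ∫ ω, B N ω ∂ℙ with hbdef
  have hbnonneg : ∀ N, 2 ≤ N → 0 ≤ b N := fun N hN =>
    integral_nonneg (fun ω => hBnonneg N hN ω)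
  have hBbound : ∀ N, 2 ≤ N → b N ≤ (N:ℝ)^2 * q N := by
    intro N hN
    have hN0 : (N:ℝ) ≠ 0 := Nat.cast_ne_zero.2 (by omega)
    have hN0' : (0:ℝ) ≤ (N:ℝ) - 1 := by
      have : (2:ℝ) ≤ N := by exact_mod_cast hN
      linarith
    have hsum_le : ∀ ω, ∑ i ∈ range N, (D N i ω)^2
        ≤ ∑ i ∈ range N, (Rm N i ω - R N ω)^2 := by
      intro ω
      have h1 : ∀ i ∈ range N, D N i ω
          = (Rm N i ω - R N ω) - (∑ k ∈ range N, (Rm N k ω - R N ω))/N := by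
        intro i hi
        rw [hDdef]
        simp only
        rw [Finset.sum_sub_distrib, Finset.sum_const, card_range, nsmul_eq_mul]
        field_simp
        ring
      calc ∑ i ∈ range N, (D N i ω)^2
          = ∑ i ∈ range N, ((Rm N i ω - R N ω)
              - (∑ k ∈ range N, (Rm N k ω - R N ω))/N)^2 :=
            Finset.sum_congr rfl (fun i hi => by rw [h1 i hi])
        _ = ∑ i ∈ range N, (Rm N i ω - R N ω)^2
              - (∑ k ∈ range N, (Rm N k ω - R N ω))^2/N :=
            aux_sum_sq N (by omega) _
        _ ≤ ∑ i ∈ range N, (Rm N i ω - R N ω)^2 := by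
            have : (0:ℝ) ≤ (∑ k ∈ range N, (Rm N k ω - R N ω))^2/N := by positivity
            linarith
    have hint1 : Integrable (fun ω => ∑ i ∈ range N, (D N i ω)^2) ℙ :=
      integrable_finset_sum _ (fun i hi => (mDL2 N i (mem_range.1 hi)).integrable_sq)
    have hint2 : Integrable (fun ω => ∑ i ∈ range N, (Rm N i ω - R N ω)^2) ℙ :=
      integrable_finset_sum _ (fun i hi => hRmRInt N i (mem_range.1 hi))
    have hstep : ∫ ω, ∑ i ∈ range N, (Rm N i ω - R N ω)^2 ∂ℙ = N * q N := by
      rw [integral_finset_sum _ (fun i hi => hRmRInt N i (mem_range.1 hi))]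
      rw [Finset.sum_congr rfl (fun i hi => hERmR N i (mem_range.1 hi))]
      simp [hqdef, mul_comm]
    calc b N = ((N:ℝ)-1) * ∫ ω, ∑ i ∈ range N, (D N i ω)^2 ∂ℙ := by
          rw [hbdef]; simp only [hBdef]; exact integral_const_mul _ _
      _ ≤ ((N:ℝ)-1) * ∫ ω, ∑ i ∈ range N, (Rm N i ω - R N ω)^2 ∂ℙ :=
          mul_le_mul_of_nonneg_left (integral_mono hint1 hint2 hsum_le) hN0'
      _ = ((N:ℝ)-1) * ((N:ℝ) * q N) := by rw [hstep]
      _ ≤ (N:ℝ)^2 * q N := by nlinarith [hqnonneg N, Nat.cast_nonneg (α := ℝ) N]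
  -- b tends to 0
  have hbto0 : Tendsto b atTop (nhds 0) := by
    apply tendsto_of_tendsto_of_tendsto_of_le_of_le' tendsto_const_nhds hR2
    · filter_upwards [eventually_ge_atTop 2] with N hN
      exact hbnonneg N hN
    · filter_upwards [eventually_ge_atTop 2] with N hN
      exact hBbound N hN
  -- the weight t and the bound γ
  set t : ℕ → ℝ := fun N => Real.sqrt (b N) + 1/((N:ℝ)+1) with htdef
  have htpos : ∀ N, 2 ≤ N → 0 < t N := by
    intro N hN
    have h1 : (0:ℝ) ≤ Real.sqrt (b N) := Real.sqrt_nonneg _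
    have h2 : (0:ℝ) < 1/((N:ℝ)+1) := by positivity
    simp only [htdef]
    linarith
  have hsqrtb : Tendsto (fun N => Real.sqrt (b N)) atTop (nhds 0) := by
    have := (Real.continuous_sqrt.tendsto 0).comp hbto0
    rwa [Real.sqrt_zero] at this
  have htto0 : Tendsto t atTop (nhds 0) := by
    have h2 : Tendsto (fun N : ℕ => 1/((N:ℝ)+1)) atTop (nhds 0) :=
      tendsto_one_div_add_atTop_nhds_zero_nat
    have h3 := hsqrtb.add h2
    rw [htdef]
    simpa [one_div] using h3
  set γ : ℕ → ℝ := fun N => t N * σ2T + Real.sqrt (b N) + b N with hγdef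
  have hγto0 : Tendsto γ atTop (nhds 0) := by
    have h4 : Tendsto (fun N => t N * σ2T) atTop (nhds (0 * σ2T)) :=
      htto0.mul tendsto_const_nhds
    have := (h4.add hsqrtb).add hbto0
    simpa using this
  -- measurability of σhat and G
  have hmeasσhat : ∀ N, Measurable (σhat N) := by
    intro N
    have : σhat N = fun ω => ((N:ℝ)-1) *
        ∑ i ∈ range N, (Tm N i ω - ((1:ℝ)/N) * ∑ k ∈ range N, Tm N k ω)^2 :=
      funext (fun ω => hσhat N ω)
    rw [this]
    apply Measurable.const_mul
    apply Finset.measurable_sum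
    intro i _
    exact ((hmeasTm N i).sub ((Finset.measurable_sum _ (fun k _ => hmeasTm N k)).const_mul _)).pow_const 2
  have hmeasG : ∀ N, Measurable (G N) := fun N => (hmeasσhat N).sub (hmeasA N)
  -- pointwise bound on G
  have hGbound : ∀ N, 2 ≤ N → ∀ ω,
      |G N ω| ≤ t N * A N ω + B N ω / t N + B N ω := by
    intro N hN ω
    have hN1 : ((N:ℝ)-1) ≠ 0 := by
      have : (2:ℝ) ≤ N := by exact_mod_cast hN
      linarith
    have hG2CB : G N ω = 2 * C N ω + B N ω := by
      have hg : G N ω = σhat N ω - A N ω := rfl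
      rw [hg, hkey N hN ω]
      ring
    have hCsq : (C N ω)^2 ≤ A N ω * B N ω := by
      have hcs := Finset.sum_mul_sq_le_sq_mul_sq (range N)
        (fun i => S N ω/N - Y i ω) (fun i => D N i ω)
      have hAform2 : A N ω = (1/((N:ℝ)-1)) * ∑ i ∈ range N, (S N ω/N - Y i ω)^2 := by
        rw [hAform N (by omega) ω]
        congr 1
        exact Finset.sum_congr rfl (fun i _ => by ring)
      have hAB : A N ω * B N ω
          = (∑ i ∈ range N, (S N ω/N - Y i ω)^2) * ∑ i ∈ range N, (D N i ω)^2 := by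
        rw [hAform2, hBdef]
        simp only
        field_simp
      rw [hAB, hCdef]
      exact hcs
    have h2C : 2 * |C N ω| ≤ t N * A N ω + B N ω / t N :=
      aux_amgm _ _ _ _ (htpos N hN) (hAnonneg N hN ω) (hBnonneg N hN ω) hCsq
    calc |G N ω| = |2 * C N ω + B N ω| := by rw [hG2CB]
      _ ≤ |2 * C N ω| + |B N ω| := abs_add_le _ _
      _ = 2 * |C N ω| + B N ω := by
          rw [abs_mul, abs_of_nonneg (hBnonneg N hN ω)]
          norm_num
      _ ≤ t N * A N ω + B N ω / t N + B N ω := by linarith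
  -- integrability of G and the L¹ bound
  have hφint : ∀ N, 2 ≤ N →
      Integrable (fun ω => t N * A N ω + B N ω / t N + B N ω) ℙ := by
    intro N hN
    exact (((hAint N).const_mul _).add ((hBint N hN).div_const _)).add (hBint N hN)
  have hGint : ∀ N, 2 ≤ N → Integrable (G N) ℙ := by
    intro N hN
    apply Integrable.mono' (hφint N hN) (hmeasG N).aestronglyMeasurable
    filter_upwards with ω
    rw [Real.norm_eq_abs]
    exact hGbound N hN ω
  have hGL1 : ∀ N, 2 ≤ N → ∫ ω, |G N ω| ∂ℙ ≤ γ N := by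
    intro N hN
    have h1 : ∫ ω, |G N ω| ∂ℙ ≤ ∫ ω, (t N * A N ω + B N ω / t N + B N ω) ∂ℙ := by
      apply integral_mono (hGint N hN).abs (hφint N hN)
      exact fun ω => hGbound N hN ω
    have h2 : ∫ ω, (t N * A N ω + B N ω / t N + B N ω) ∂ℙ
        = t N * σ2T + b N / t N + b N := by
      have i1 : Integrable (fun ω => t N * A N ω) ℙ := (hAint N).const_mul _
      have i2 : Integrable (fun ω => B N ω / t N) ℙ := (hBint N hN).div_const _
      have i12 : Integrable (fun ω => t N * A N ω + B N ω / t N) ℙ := i1.add i2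
      rw [integral_add i12 (hBint N hN), integral_add i1 i2,
        integral_const_mul, integral_div, hEA N hN]
    have h3 : b N / t N ≤ Real.sqrt (b N) := by
      rcases eq_or_lt_of_le (hbnonneg N hN) with hb0 | hbpos
      · rw [← hb0]
        simp [Real.sqrt_nonneg]
      · have hsq : 0 < Real.sqrt (b N) := Real.sqrt_pos.2 hbpos
        have hts : Real.sqrt (b N) ≤ t N := by
          rw [htdef]
          have : (0:ℝ) < 1/((N:ℝ)+1) := by positivity
          simp only
          linarith
        calc b N / t N ≤ b N / Real.sqrt (b N) :=
              div_le_div_of_nonneg_left (le_of_lt hbpos) hsq hts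
          _ = Real.sqrt (b N) := Real.div_sqrt
    calc ∫ ω, |G N ω| ∂ℙ ≤ t N * σ2T + b N / t N + b N := by rw [← h2]; exact h1
      _ ≤ t N * σ2T + Real.sqrt (b N) + b N := by linarith
      _ = γ N := rfl
  -- conclusion 2 : expectation
  have hexp : Tendsto (fun N : ℕ => ∫ ω, σhat N ω ∂ℙ) atTop (nhds σ2T) := by
    have hEσhat : ∀ N, 2 ≤ N → ∫ ω, σhat N ω ∂ℙ = σ2T + ∫ ω, G N ω ∂ℙ := by
      intro N hN
      have : σhat N = fun ω => A N ω + G N ω := by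
        funext ω
        have hg : G N ω = σhat N ω - A N ω := rfl
        rw [hg]
        ring
      rw [this, integral_add (hAint N) (hGint N hN), hEA N hN]
    have hlow : ∀ᶠ N : ℕ in atTop, σ2T - γ N ≤ ∫ ω, σhat N ω ∂ℙ := by
      filter_upwards [eventually_ge_atTop 2] with N hN
      rw [hEσhat N hN]
      have h4' : |∫ ω, G N ω ∂ℙ| ≤ ∫ ω, |G N ω| ∂ℙ := by
        simpa [Real.norm_eq_abs] using norm_integral_le_integral_norm (fun ω => G N ω) (μ := ℙ)
      have h4 : |∫ ω, G N ω ∂ℙ| ≤ γ N := le_trans h4' (hGL1 N hN)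
      have := abs_le.1 h4
      linarith [this.1]
    have hhigh : ∀ᶠ N : ℕ in atTop, ∫ ω, σhat N ω ∂ℙ ≤ σ2T + γ N := by
      filter_upwards [eventually_ge_atTop 2] with N hN
      rw [hEσhat N hN]
      have h4' : |∫ ω, G N ω ∂ℙ| ≤ ∫ ω, |G N ω| ∂ℙ := by
        simpa [Real.norm_eq_abs] using norm_integral_le_integral_norm (fun ω => G N ω) (μ := ℙ)
      have h4 : |∫ ω, G N ω ∂ℙ| ≤ γ N := le_trans h4' (hGL1 N hN)
      have := abs_le.1 h4
      linarith [this.2]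
    have hl : Tendsto (fun N : ℕ => σ2T - γ N) atTop (nhds (σ2T - 0)) :=
      tendsto_const_nhds.sub hγto0
    have hh : Tendsto (fun N : ℕ => σ2T + γ N) atTop (nhds (σ2T + 0)) :=
      tendsto_const_nhds.add hγto0
    rw [sub_zero] at hl
    rw [add_zero] at hh
    exact tendsto_of_tendsto_of_tendsto_of_le_of_le' hl hh hlow hhigh
  -- conclusion 1 : in probability
  have hprob : ∀ ε > 0, Tendsto (fun N : ℕ =>
      ℙ {ω | ε < |σhat N ω - σ2T|}) atTop (nhds 0) := by
    intro ε hε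
    have hAim : TendstoInMeasure ℙ A atTop (fun _ => σ2T) :=
      tendstoInMeasure_of_tendsto_ae (fun n => (hmeasA n).aestronglyMeasurable) hAae
    have hA_prob : Tendsto (fun N : ℕ => ℙ {ω | ε/2 ≤ |A N ω - σ2T|}) atTop (nhds 0) := by
      have := tendstoInMeasure_iff_dist.1 hAim (ε/2) (half_pos hε)
      simpa [Real.dist_eq] using this
    have hG_prob : Tendsto (fun N : ℕ => ℙ {ω | ε/2 ≤ |G N ω|}) atTop (nhds 0) := by
      have hup : ∀ᶠ N : ℕ in atTop,
          ℙ {ω | ε/2 ≤ |G N ω|} ≤ ENNReal.ofReal (γ N / (ε/2)) := by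
        filter_upwards [eventually_ge_atTop 2] with N hN
        have hmarkov := mul_meas_ge_le_integral_of_nonneg
          (ae_of_all ℙ (fun ω => abs_nonneg (G N ω))) (hGint N hN).abs (ε/2)
        have h5 : (ℙ {ω | ε/2 ≤ |G N ω|}).toReal ≤ γ N / (ε/2) := by
          rw [le_div_iff₀ (half_pos hε)]
          calc (ℙ {ω | ε/2 ≤ |G N ω|}).toReal * (ε/2)
              = (ε/2) * (ℙ {ω | ε/2 ≤ |G N ω|}).toReal := mul_comm _ _
            _ ≤ ∫ ω, |G N ω| ∂ℙ := hmarkov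
            _ ≤ γ N := hGL1 N hN
        calc ℙ {ω | ε/2 ≤ |G N ω|}
            = ENNReal.ofReal ((ℙ {ω | ε/2 ≤ |G N ω|}).toReal) :=
              (ENNReal.ofReal_toReal (measure_ne_top _ _)).symm
          _ ≤ ENNReal.ofReal (γ N / (ε/2)) := ENNReal.ofReal_le_ofReal h5
      have hupto : Tendsto (fun N : ℕ => ENNReal.ofReal (γ N / (ε/2))) atTop (nhds 0) := by
        have h6 : Tendsto (fun N : ℕ => γ N / (ε/2)) atTop (nhds 0) := by
          have := hγto0.div_const (ε/2)
          simpa using this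
        have := (ENNReal.continuous_ofReal.tendsto 0).comp h6
        rwa [ENNReal.ofReal_zero] at this
      exact tendsto_of_tendsto_of_tendsto_of_le_of_le' tendsto_const_nhds hupto
        (Eventually.of_forall (fun N => zero_le)) hup
    have hsubset : ∀ N, 2 ≤ N → ℙ {ω | ε < |σhat N ω - σ2T|}
        ≤ ℙ {ω | ε/2 ≤ |A N ω - σ2T|} + ℙ {ω | ε/2 ≤ |G N ω|} := by
      intro N hN
      refine le_trans (measure_mono ?_) (measure_union_le _ _)
      intro ω hω
      simp only [Set.mem_setOf_eq, Set.mem_union] at *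
      by_contra hcon
      push_neg at hcon
      obtain ⟨hc1, hc2⟩ := hcon
      have hdec : σhat N ω - σ2T = (A N ω - σ2T) + G N ω := by
        have hg : G N ω = σhat N ω - A N ω := rfl
        rw [hg]
        ring
      have htri : |σhat N ω - σ2T| ≤ |A N ω - σ2T| + |G N ω| := by
        rw [hdec]
        exact abs_add_le _ _
      linarith
    have hsum : Tendsto (fun N : ℕ => ℙ {ω | ε/2 ≤ |A N ω - σ2T|}
        + ℙ {ω | ε/2 ≤ |G N ω|}) atTop (nhds 0) := by
      have := hA_prob.add hG_prob
      simpa using this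
    apply tendsto_of_tendsto_of_tendsto_of_le_of_le' tendsto_const_nhds hsum
      (Eventually.of_forall (fun N => zero_le))
    filter_upwards [eventually_ge_atTop 2] with N hN
    exact hsubset N hN
  exact ⟨hprob, hexp⟩
end
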